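/- arXiv:2509.13717 — 6 statements merged into one kernel-verified Lean document; each statement's English description precedes it below -/
import Mathlib

section
/- Let (X_1,U_1),...,(X_n,U_n),(X_{n+1},U_{n+1}) be i.i.d. random pairs with values in ℝ^d × ℝ, let u_θ : ℝ^d → ℝ be a fixed measurable predictor, and fix α ∈ (0,1) with k := ⌈(1−α)(n+1)⌉ ≤ n. Define nonconformity scores r_i = |U_i − u_θ(X_i)| for i = 1,...,n and let q be the k-th smallest value among r_1,...,r_n. Then the vanilla conformal prediction interval I(x) = [u_θ(x) − q, u_θ(x) + q] satisfies P( U_{n+1} ∈ I(X_{n+1}) ) ≥ 1 − α. -/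
open MeasureTheory ProbabilityTheory
open scoped ENNReal

/-- The `k`-th smallest value among `f 0, ..., f (n-1)` (the `k`-th order statistic). -/
noncomputable def kthSmallest {n : ℕ} (k : ℕ) (f : Fin n → ℝ) : ℝ :=
  sInf {t : ℝ | k ≤ (Finset.univ.filter fun i => f i ≤ t).card}


section Det
variable {m k : ℕ} (f : Fin m → ℝ)

lemma kth_nonempty (hk : k ≤ m) (hm : 0 < m) :
    {t : ℝ | k ≤ (Finset.univ.filter fun i => f i ≤ t).card}.Nonempty := by
  have hne : (Finset.univ.image f).Nonempty := by
    simp [Finset.image_nonempty, Finset.univ_nonempty_iff, Fin.pos_iff_nonempty.mp hm]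
  refine ⟨(Finset.univ.image f).max' hne, ?_⟩
  have : (Finset.univ.filter fun i => f i ≤ (Finset.univ.image f).max' hne) = Finset.univ := by
    ext i
    simp only [Finset.mem_filter, Finset.mem_univ, true_and, iff_true]
    exact Finset.le_max' _ _ (Finset.mem_image_of_mem f (Finset.mem_univ i))
  simp only [Set.mem_setOf_eq, this, Finset.card_univ, Fintype.card_fin]
  exact hk

lemma kth_bddBelow (hk1 : 1 ≤ k) :
    BddBelow {t : ℝ | k ≤ (Finset.univ.filter fun i => f i ≤ t).card} := by
  rcases Nat.eq_zero_or_pos m with hm | hm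
  · refine ⟨0, fun t ht => ?_⟩
    simp only [Set.mem_setOf_eq] at ht
    have : (Finset.univ.filter fun i => f i ≤ t).card ≤ m := by
      have := Finset.card_le_card (Finset.filter_subset (fun i => f i ≤ t) Finset.univ)
      simpa using this
    omega
  have hne : (Finset.univ.image f).Nonempty := by
    simp [Finset.image_nonempty, Finset.univ_nonempty_iff, Fin.pos_iff_nonempty.mp hm]
  refine ⟨(Finset.univ.image f).min' hne, fun t ht => ?_⟩
  simp only [Set.mem_setOf_eq] at ht
  have hpos : 0 < (Finset.univ.filter fun i => f i ≤ t).card := lt_of_lt_of_le hk1 ht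
  obtain ⟨i, hi⟩ := Finset.card_pos.mp hpos
  simp only [Finset.mem_filter] at hi
  exact le_trans (Finset.min'_le _ _ (Finset.mem_image_of_mem f (Finset.mem_univ i))) hi.2

/-- At least `k` values are `≤ kthSmallest k f`. -/
lemma kth_card_le (hk1 : 1 ≤ k) (hk : k ≤ m) :
    k ≤ (Finset.univ.filter fun i => f i ≤ kthSmallest k f).card := by
  have hm : 0 < m := lt_of_lt_of_le hk1 hk
  by_contra h
  push_neg at h
  set q := kthSmallest k f with hq
  have hB : (Finset.univ.filter fun i => q < f i).Nonempty := by
    rw [← Finset.card_pos]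
    have := Finset.card_filter_add_card_filter_not (s := Finset.univ)
      (p := fun i : Fin m => f i ≤ q)
    simp only [not_le, Finset.card_univ, Fintype.card_fin] at this
    omega
  obtain ⟨i₁, hi₁, hmin⟩ := Finset.exists_min_image _ f hB
  simp only [Finset.mem_filter, Finset.mem_univ, true_and] at hi₁
  have hlb : f i₁ ≤ q := by
    refine le_csInf (kth_nonempty f hk hm) fun t ht => ?_
    by_contra hlt
    push_neg at hlt
    simp only [Set.mem_setOf_eq] at ht
    have hsub : (Finset.univ.filter fun i => f i ≤ t) ⊆
        (Finset.univ.filter fun i => f i ≤ q) := by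
      intro i hi
      simp only [Finset.mem_filter, Finset.mem_univ, true_and] at hi ⊢
      by_contra hgt
      push_neg at hgt
      have : f i₁ ≤ f i := hmin i (by simp [hgt])
      linarith
    exact absurd (le_trans ht (Finset.card_le_card hsub)) (not_le.mpr h)
  linarith

/-- Fewer than `k` values are `< kthSmallest k f`. -/
lemma kth_card_lt (hk1 : 1 ≤ k) (hk : k ≤ m) :
    (Finset.univ.filter fun i => f i < kthSmallest k f).card < k := by
  have hm : 0 < m := lt_of_lt_of_le hk1 hk
  by_contra h
  push_neg at h
  set q := kthSmallest k f with hq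
  have hF : (Finset.univ.filter fun i => f i < q).Nonempty := by
    rw [← Finset.card_pos]; omega
  obtain ⟨i₀, hi₀, hmax⟩ := Finset.exists_max_image _ f hF
  simp only [Finset.mem_filter, Finset.mem_univ, true_and] at hi₀
  have : q ≤ f i₀ := by
    refine csInf_le (kth_bddBelow f hk1) ?_
    simp only [Set.mem_setOf_eq]
    refine le_trans h (Finset.card_le_card ?_)
    intro i hi
    simp only [Finset.mem_filter, Finset.mem_univ, true_and] at hi ⊢
    exact hmax i (by simp [hi])
  linarith

/-- Rank abundance: at least `k` indices have strict rank `< k`. -/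
lemma rank_abundance (hk1 : 1 ≤ k) (hk : k ≤ m) :
    k ≤ (Finset.univ.filter fun j =>
      (Finset.univ.filter fun i => f i < f j).card < k).card := by
  refine le_trans (kth_card_le f hk1 hk) (Finset.card_le_card ?_)
  intro j hj
  simp only [Finset.mem_filter, Finset.mem_univ, true_and] at hj ⊢
  refine lt_of_le_of_lt (Finset.card_le_card ?_) (kth_card_lt f hk1 hk)
  intro i hi
  simp only [Finset.mem_filter, Finset.mem_univ, true_and] at hi ⊢
  linarith

end Det

/-- If the strict rank of the last value is `< k`, it is below the `k`-th smallest of the rest. -/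
lemma rank_lt_imp_le_kth {n k : ℕ} (hk1 : 1 ≤ k) (hkn : k ≤ n) (f : Fin (n+1) → ℝ)
    (h : (Finset.univ.filter fun i => f i < f (Fin.last n)).card < k) :
    f (Fin.last n) ≤ kthSmallest k (fun i : Fin n => f i.castSucc) := by
  have hn : 0 < n := lt_of_lt_of_le hk1 hkn
  refine le_csInf (kth_nonempty _ hkn hn) fun t ht => ?_
  simp only [Set.mem_setOf_eq] at ht
  by_contra hlt
  push_neg at hlt
  have : (Finset.univ.filter fun i : Fin n => f i.castSucc ≤ t).card ≤
      (Finset.univ.filter fun i => f i < f (Fin.last n)).card := by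
    refine Finset.card_le_card_of_injOn Fin.castSucc ?_
      (Fin.castSucc_injective n).injOn
    intro i hi
    simp only [Finset.mem_coe, Finset.mem_filter, Finset.mem_univ, true_and] at hi ⊢
    linarith
  omega

section Prob
variable {n k : ℕ}

/-- The event sets. -/
def rankSet (k : ℕ) (j : Fin (n+1)) : Set (Fin (n+1) → ℝ) :=
  {x | (Finset.univ.filter fun i => x i < x j).card < k}

lemma measurable_rankCard (j : Fin (n+1)) :
    Measurable fun x : Fin (n+1) → ℝ => (Finset.univ.filter fun i => x i < x j).card := by
  have : (fun x : Fin (n+1) → ℝ => (Finset.univ.filter fun i => x i < x j).card)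
      = fun x => ∑ i : Fin (n+1), if x i < x j then 1 else 0 := by
    funext x; exact Finset.card_filter _ _
  rw [this]
  refine Finset.measurable_sum _ fun i _ => Measurable.ite ?_ measurable_const measurable_const
  exact measurableSet_lt (measurable_pi_apply i) (measurable_pi_apply j)

lemma measurable_rankSet (j : Fin (n+1)) : MeasurableSet (rankSet k j) :=
  measurable_rankCard j (by trivial : MeasurableSet (Set.Iio k))

/-- permutation invariance of the product measure -/
lemma pi_map_perm (ν : Measure ℝ) [IsProbabilityMeasure ν] (σ : Equiv.Perm (Fin (n+1))) :
    (Measure.pi fun _ : Fin (n+1) => ν).map (fun x i => x (σ i)) =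
      Measure.pi fun _ : Fin (n+1) => ν := by
  have hT : Measurable fun x : Fin (n+1) → ℝ => fun i => x (σ i) :=
    measurable_pi_lambda _ fun i => measurable_pi_apply (σ i)
  refine (Measure.pi_eq fun s hs => ?_).symm
  rw [Measure.map_apply hT (MeasurableSet.univ_pi hs)]
  have hpre : (fun x : Fin (n+1) → ℝ => fun i => x (σ i)) ⁻¹' Set.univ.pi s
      = Set.univ.pi fun i => s (σ.symm i) := by
    ext x
    simp only [Set.mem_preimage, Set.mem_pi, Set.mem_univ, forall_true_left, true_implies]
    constructor
    · intro h i; simpa using h (σ.symm i)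
    · intro h i; simpa using h (σ i)
  rw [hpre, Measure.pi_pi]
  exact Equiv.prod_comp σ.symm fun i => ν (s i)

lemma rankSet_swap (j : Fin (n+1)) :
    (fun x : Fin (n+1) → ℝ => fun i => x (Equiv.swap j (Fin.last n) i)) ⁻¹'
      rankSet k (Fin.last n) = rankSet k j := by
  set σ := Equiv.swap j (Fin.last n)
  ext x
  simp only [Set.mem_preimage, rankSet, Set.mem_setOf_eq]
  have hlast : σ (Fin.last n) = j := Equiv.swap_apply_right _ _
  have hcard : (Finset.univ.filter fun i => x (σ i) < x (σ (Fin.last n))).card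
      = (Finset.univ.filter fun i => x i < x (σ (Fin.last n))).card := by
    refine Finset.card_bij (fun i _ => σ i) ?_ ?_ ?_
    · intro i hi; simp only [Finset.mem_filter, Finset.mem_univ, true_and] at hi ⊢; exact hi
    · intro a _ b _ h; exact σ.injective h
    · intro b hb
      refine ⟨σ.symm b, ?_, by simp⟩
      simp only [Finset.mem_filter, Finset.mem_univ, true_and] at hb ⊢
      simpa using hb
  rw [hcard, hlast]

end Prob
/-- **Vanilla conformal prediction coverage.**  If `(X i, U i)`, `i = 0, …, n`, are i.i.d.
pairs, `uθ` is a fixed measurable predictor, `α ∈ (0,1)`, `k = ⌈(1-α)(n+1)⌉ ≤ n`,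
`q` is the `k`-th smallest of the calibration residuals `|U i - uθ (X i)|`, then the interval
`[uθ x - q, uθ x + q]` covers the test response with probability at least `1 - α`. -/
theorem vanilla_cp_coverage
    {Ω : Type*} [MeasurableSpace Ω] (P : Measure Ω) [IsProbabilityMeasure P]
    {d n : ℕ}
    (X : Fin (n + 1) → Ω → (Fin d → ℝ)) (U : Fin (n + 1) → Ω → ℝ)
    (hmeas : ∀ i, Measurable fun ω => (X i ω, U i ω))
    (hindep : iIndepFun (fun i ω => (X i ω, U i ω)) P)
    (hid : ∀ i j, IdentDistrib (fun ω => (X i ω, U i ω)) (fun ω => (X j ω, U j ω)) P P)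
    (uθ : (Fin d → ℝ) → ℝ) (huθ : Measurable uθ)
    (α : ℝ) (hα : α ∈ Set.Ioo (0 : ℝ) 1)
    (k : ℕ) (hk : k = ⌈(1 - α) * (n + 1 : ℝ)⌉₊) (hkn : k ≤ n)
    (q : Ω → ℝ)
    (hq : ∀ ω, q ω =
      kthSmallest k (fun i : Fin n => |U i.castSucc ω - uθ (X i.castSucc ω)|)) :
    ENNReal.ofReal (1 - α) ≤
      P {ω | uθ (X (Fin.last n) ω) - q ω ≤ U (Fin.last n) ω ∧
             U (Fin.last n) ω ≤ uθ (X (Fin.last n) ω) + q ω} := by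
  obtain ⟨hα0, hα1⟩ := hα
  have hk1 : 1 ≤ k := by
    rw [hk]
    refine Nat.one_le_ceil_iff.mpr ?_
    have : (0:ℝ) < 1 - α := by linarith
    positivity
  -- residuals
  set R : Fin (n+1) → Ω → ℝ := fun i ω => |U i ω - uθ (X i ω)| with hRdef
  have hφ : Measurable fun p : (Fin d → ℝ) × ℝ => |p.2 - uθ p.1| :=
    (measurable_snd.sub (huθ.comp measurable_fst)).abs
  have hRmeas : ∀ i, Measurable (R i) := fun i => hφ.comp (hmeas i)
  have hRindep : iIndepFun R P :=
    hindep.comp (fun _ => fun p => |p.2 - uθ p.1|) (fun _ => hφ)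
  have hRid : ∀ i, P.map (R i) = P.map (R (Fin.last n)) := fun i =>
    ((hid i (Fin.last n)).comp hφ).map_eq
  set ν : Measure ℝ := P.map (R (Fin.last n)) with hν
  haveI hνprob : IsProbabilityMeasure ν :=
    Measure.isProbabilityMeasure_map (hRmeas _).aemeasurable
  set V : Ω → (Fin (n+1) → ℝ) := fun ω i => R i ω with hVdef
  have hVmeas : Measurable V := measurable_pi_lambda _ hRmeas
  have hmapV : P.map V = Measure.pi (fun _ : Fin (n+1) => ν) := by
    refine (Measure.pi_eq (μ := fun _ : Fin (n+1) => ν) fun s hs => ?_).symm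
    rw [Measure.map_apply hVmeas (MeasurableSet.univ_pi hs)]
    have hpre : V ⁻¹' Set.univ.pi s = ⋂ i, R i ⁻¹' s i := by
      ext ω
      simp [Set.mem_pi, hVdef, Set.mem_iInter]
    rw [hpre, hRindep.meas_iInter fun i => ⟨s i, hs i, rfl⟩]
    refine Finset.prod_congr rfl fun i _ => ?_
    rw [← Measure.map_apply (hRmeas i) (hs i), hRid i]
  set μ : Measure (Fin (n+1) → ℝ) := Measure.pi (fun _ : Fin (n+1) => ν) with hμdef
  have hμprob : IsProbabilityMeasure μ := by infer_instance
  -- exchangeability of the rank events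
  have hAeq : ∀ j : Fin (n+1), μ (rankSet k j) = μ (rankSet (n := n) k (Fin.last n)) := by
    intro j
    have hT : Measurable fun x : Fin (n+1) → ℝ => fun i => x (Equiv.swap j (Fin.last n) i) :=
      measurable_pi_lambda _ fun i => measurable_pi_apply _
    conv_lhs => rw [← rankSet_swap (k := k) j]
    rw [← Measure.map_apply hT (measurable_rankSet _), hμdef,
      pi_map_perm ν (Equiv.swap j (Fin.last n))]
  -- k ≤ (n+1) * μ (rankSet k last)
  have hsum : (k : ℝ≥0∞) ≤ (n+1) * μ (rankSet (n := n) k (Fin.last n)) := by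
    have h1 : ∑ j : Fin (n+1), μ (rankSet k j)
        = (n+1) * μ (rankSet (n := n) k (Fin.last n)) := by
      simp [hAeq, Finset.sum_const]
    have h2 : (k : ℝ≥0∞) ≤ ∑ j : Fin (n+1), μ (rankSet k j) := by
      classical
      have heq : ∀ j : Fin (n+1), μ (rankSet k j)
          = ∫⁻ x, (rankSet k j).indicator (1 : (Fin (n+1) → ℝ) → ℝ≥0∞) x ∂μ := fun j =>
        (lintegral_indicator_one (measurable_rankSet j)).symm
      simp_rw [heq]
      rw [← lintegral_finset_sum (μ := μ) Finset.univ
        (f := fun j : Fin (n+1) => (rankSet k j).indicator (1 : (Fin (n+1) → ℝ) → ℝ≥0∞))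
        (fun j _ => measurable_const.indicator (measurable_rankSet j))]
      have hpt : ∀ x : Fin (n+1) → ℝ, (k : ℝ≥0∞)
          ≤ ∑ j : Fin (n+1), (rankSet k j).indicator (1 : (Fin (n+1) → ℝ) → ℝ≥0∞) x := by
        intro x
        have h3 : ∑ j : Fin (n+1), (rankSet k j).indicator (1 : (Fin (n+1) → ℝ) → ℝ≥0∞) x
            = ((Finset.univ.filter fun j : Fin (n+1) =>
                (Finset.univ.filter fun i => x i < x j).card < k).card : ℝ≥0∞) := by
          rw [Finset.natCast_card_filter]
          refine Finset.sum_congr rfl fun j _ => ?_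
          by_cases hj : (Finset.univ.filter fun i => x i < x j).card < k
          · rw [if_pos hj, Set.indicator_of_mem (show x ∈ rankSet k j from hj)]
            rfl
          · rw [if_neg hj, Set.indicator_of_notMem (show x ∉ rankSet k j from hj)]
        rw [h3]
        exact Nat.cast_le.mpr (rank_abundance x hk1 (le_trans hkn (Nat.le_succ n)))
      calc (k : ℝ≥0∞) = ∫⁻ _, (k : ℝ≥0∞) ∂μ := by simp
        _ ≤ _ := lintegral_mono hpt
    rw [← h1]; exact h2
  -- inclusion of events
  have hsub : V ⁻¹' rankSet (n := n) k (Fin.last n) ⊆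
      {ω | uθ (X (Fin.last n) ω) - q ω ≤ U (Fin.last n) ω ∧
           U (Fin.last n) ω ≤ uθ (X (Fin.last n) ω) + q ω} := by
    intro ω hω
    have hrank : (Finset.univ.filter fun i => V ω i < V ω (Fin.last n)).card < k := hω
    have hle := rank_lt_imp_le_kth hk1 hkn (V ω) hrank
    have hqeq : kthSmallest k (fun i : Fin n => V ω i.castSucc) = q ω := (hq ω).symm
    rw [hqeq] at hle
    have habs : |U (Fin.last n) ω - uθ (X (Fin.last n) ω)| ≤ q ω := hle
    obtain ⟨h1, h2⟩ := abs_le.mp habs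
    constructor <;> [linarith; linarith]
  -- put it together
  have hmeasA : P (V ⁻¹' rankSet (n := n) k (Fin.last n))
      = μ (rankSet (n := n) k (Fin.last n)) := by
    rw [← hmapV] at *
    rw [Measure.map_apply hVmeas (measurable_rankSet _)]
  have hreal : (1 - α) * (n + 1 : ℝ) ≤ k := by
    rw [hk]; exact Nat.le_ceil _
  have hfinal : ENNReal.ofReal (1 - α) ≤ μ (rankSet (n := n) k (Fin.last n)) := by
    have hdiv : ENNReal.ofReal (1 - α) ≤ (k : ℝ≥0∞) / (n+1 : ℝ≥0∞) := by
      have h1 : (1 - α : ℝ) ≤ (k : ℝ) / ((n : ℝ) + 1) := by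
        rw [le_div_iff₀ (by positivity)]
        linarith
      calc ENNReal.ofReal (1 - α) ≤ ENNReal.ofReal ((k : ℝ) / ((n : ℝ) + 1)) :=
            ENNReal.ofReal_le_ofReal h1
        _ = (k : ℝ≥0∞) / (n+1 : ℝ≥0∞) := by
            rw [ENNReal.ofReal_div_of_pos (by positivity)]
            congr 1
            · exact ENNReal.ofReal_natCast k
            · rw [ENNReal.ofReal_add (by positivity) zero_le_one]
              simp [ENNReal.ofReal_natCast]
    refine le_trans hdiv ?_
    refine ENNReal.div_le_of_le_mul ?_
    rw [mul_comm] at hsum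
    exact hsum
  calc ENNReal.ofReal (1 - α) ≤ μ (rankSet (n := n) k (Fin.last n)) := hfinal
    _ = P (V ⁻¹' rankSet (n := n) k (Fin.last n)) := hmeasA.symm
    _ ≤ _ := measure_mono hsub
end

section
/- Let (X_1,U_1),...,(X_n,U_n),(X_{n+1},U_{n+1}) be i.i.d. random pairs with values in ℝ^d × ℝ, let u_θ : ℝ^d → ℝ be a fixed measurable predictor, let σ : ℝ^d → ℝ be a fixed measurable function with σ(x) > 0 for all x, and fix α ∈ (0,1) with k := ⌈(1−α)(n+1)⌉ ≤ n. Define scaled nonconformity scores s_i = |U_i − u_θ(X_i)| / σ(X_i) for i = 1,...,n and let q be the k-th smallest value among s_1,...,s_n. Then the scaled conformal prediction interval I(x) = [u_θ(x) − q σ(x), u_θ(x) + q σ(x)] satisfies P( U_{n+1} ∈ I(X_{n+1}) ) ≥ 1 − α. -/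
open MeasureTheory ProbabilityTheory
open scoped ENNReal

namespace ScaledCP

open Finset

/-- Pigeonhole: at least `k` indices have strict rank `< k`. -/
lemma card_rank_lt {N k : ℕ} (hk : k ≤ N) (f : Fin N → ℝ) :
    k ≤ (univ.filter fun j => (univ.filter fun i => f i < f j).card < k).card := by
  by_contra h
  push_neg at h
  set S := univ.filter fun j => (univ.filter fun i => f i < f j).card < k with hS
  have hSc : (univ.filter fun j => ¬ (univ.filter fun i => f i < f j).card < k).Nonempty := by
    rw [Finset.filter_nonempty_iff]
    by_contra hall
    push_neg at hall
    have hSu : S = univ := Finset.eq_univ_iff_forall.mpr fun j =>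
      Finset.mem_filter.mpr ⟨Finset.mem_univ j, hall j (Finset.mem_univ j)⟩
    rw [hSu, Finset.card_univ, Fintype.card_fin] at h
    exact absurd hk (not_le.mpr h)
  obtain ⟨j₀, hj₀mem, hj₀min⟩ := Finset.exists_min_image _ f hSc
  have hj₀ : ¬ (univ.filter fun i => f i < f j₀).card < k :=
    (Finset.mem_filter.mp hj₀mem).2
  apply hj₀
  calc (univ.filter fun i => f i < f j₀).card ≤ S.card := by
        apply Finset.card_le_card
        intro i hi
        have hfi : f i < f j₀ := (Finset.mem_filter.mp hi).2
        rw [hS, Finset.mem_filter]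
        refine ⟨Finset.mem_univ i, ?_⟩
        by_contra hik
        exact absurd (hj₀min i (Finset.mem_filter.mpr ⟨Finset.mem_univ i, hik⟩)) (not_le.mpr hfi)
    _ < k := lt_of_lt_of_le h le_rfl

lemma le_kthSmallest_iff {n k : ℕ} (hk1 : 1 ≤ k) (hkn : k ≤ n) (f : Fin n → ℝ) (u : ℝ) :
    u ≤ kthSmallest k f ↔ (univ.filter fun i => f i < u).card < k := by
  have hn : 0 < n := lt_of_lt_of_le hk1 hkn
  have hne : (univ : Finset (Fin n)).Nonempty := ⟨⟨0, hn⟩, mem_univ _⟩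
  set T := {t : ℝ | k ≤ (univ.filter fun i => f i ≤ t).card} with hT
  obtain ⟨iM, _, hiM⟩ := Finset.exists_max_image univ f hne
  obtain ⟨im, _, him⟩ := Finset.exists_min_image univ f hne
  have hTne : T.Nonempty := by
    refine ⟨f iM, ?_⟩
    simp only [hT, Set.mem_setOf_eq]
    calc k ≤ n := hkn
      _ = (univ : Finset (Fin n)).card := by simp
      _ ≤ _ := Finset.card_le_card fun i hi => Finset.mem_filter.mpr ⟨hi, hiM i hi⟩
  have hTbdd : BddBelow T := by
    refine ⟨f im, fun t ht => ?_⟩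
    simp only [hT, Set.mem_setOf_eq] at ht
    have : (univ.filter fun i => f i ≤ t).Nonempty := by
      rw [← Finset.card_pos]; exact lt_of_lt_of_le hk1 ht
    obtain ⟨i, hi⟩ := this
    exact le_trans (him i (Finset.mem_univ i)) (Finset.mem_filter.mp hi).2
  constructor
  · intro hu
    by_contra hc
    push_neg at hc
    have hAne : (univ.filter fun i => f i < u).Nonempty := by
      rw [← Finset.card_pos]; exact lt_of_lt_of_le hk1 hc
    obtain ⟨i₀, hi₀mem, hi₀⟩ := Finset.exists_max_image _ f hAne
    have hmem : f i₀ ∈ T := by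
      simp only [hT, Set.mem_setOf_eq]
      refine le_trans hc (Finset.card_le_card fun i hi => ?_)
      exact Finset.mem_filter.mpr ⟨Finset.mem_univ i, hi₀ i hi⟩
    have h1 : kthSmallest k f ≤ f i₀ := csInf_le hTbdd hmem
    have h2 : f i₀ < u := (Finset.mem_filter.mp hi₀mem).2
    have : u ≤ f i₀ := le_trans hu h1
    linarith
  · intro hc
    refine le_csInf hTne fun t ht => ?_
    by_contra hlt
    push_neg at hlt
    simp only [hT, Set.mem_setOf_eq] at ht
    have hsub : (univ.filter fun i => f i ≤ t) ⊆ univ.filter fun i => f i < u := by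
      intro i hi
      exact Finset.mem_filter.mpr ⟨Finset.mem_univ i,
        lt_of_le_of_lt (Finset.mem_filter.mp hi).2 hlt⟩
    exact absurd (le_trans ht (Finset.card_le_card hsub)) (not_le.mpr hc)

lemma measurable_count {N : ℕ} (j : Fin N) :
    Measurable fun f : Fin N → ℝ => (univ.filter fun i => f i < f j).card := by
  have h : (fun f : Fin N → ℝ => (univ.filter fun i => f i < f j).card)
      = fun f => ∑ i : Fin N, if f i < f j then 1 else 0 := by
    funext f; rw [Finset.card_filter]
  rw [h]
  refine Finset.measurable_sum _ fun i _ => ?_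
  exact Measurable.ite (measurableSet_lt (measurable_pi_apply i) (measurable_pi_apply j))
    measurable_const measurable_const

lemma measurableSet_B {N k : ℕ} (j : Fin N) :
    MeasurableSet {f : Fin N → ℝ | (univ.filter fun i => f i < f j).card < k} :=
  measurable_count j (measurableSet_lt measurable_id' measurable_const)

lemma B_preimage_swap {N k : ℕ} (j j' : Fin N) :
    (fun f : Fin N → ℝ => f ∘ Equiv.swap j j') ⁻¹'
        {f : Fin N → ℝ | (univ.filter fun i => f i < f j').card < k}
      = {f : Fin N → ℝ | (univ.filter fun i => f i < f j).card < k} := by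
  ext f
  simp only [Set.mem_preimage, Set.mem_setOf_eq, Function.comp]
  have hcard : (univ.filter fun i => f (Equiv.swap j j' i) < f (Equiv.swap j j' j')).card
      = (univ.filter fun i => f i < f j).card := by
    rw [Equiv.swap_apply_right]
    apply Finset.card_bij (fun i _ => Equiv.swap j j' i)
    · intro i hi
      exact Finset.mem_filter.mpr ⟨Finset.mem_univ _, (Finset.mem_filter.mp hi).2⟩
    · intro a _ b _ hab
      exact (Equiv.swap j j').injective hab
    · intro b hb
      refine ⟨Equiv.swap j j' b, Finset.mem_filter.mpr ⟨Finset.mem_univ _, ?_⟩, ?_⟩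
      · rw [Equiv.swap_apply_self]
        exact (Finset.mem_filter.mp hb).2
      · exact Equiv.swap_apply_self _ _ _
  rw [hcard]

lemma map_pi_of_iid {Ω : Type*} [MeasurableSpace Ω] (P : Measure Ω) [IsProbabilityMeasure P]
    {N : ℕ} (s : Fin N → Ω → ℝ) (hs : ∀ i, Measurable (s i))
    (hind : iIndepFun s P)
    (μ : Measure ℝ) [IsProbabilityMeasure μ] (hμ : ∀ i, P.map (s i) = μ) :
    P.map (fun ω i => s i ω) = Measure.pi fun _ : Fin N => μ := by
  refine (Measure.pi_eq fun A hA => ?_).symm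
  have hV : Measurable fun ω (i : Fin N) => s i ω := measurable_pi_lambda _ hs
  rw [Measure.map_apply hV (MeasurableSet.pi Set.countable_univ fun i _ => hA i)]
  have hpre : (fun ω (i : Fin N) => s i ω) ⁻¹' Set.pi Set.univ A = ⋂ i, s i ⁻¹' A i := by
    ext ω; simp [Set.mem_pi]
  rw [hpre, hind.meas_iInter fun i => ⟨A i, hA i, rfl⟩]
  exact Finset.prod_congr rfl fun i _ => by
    rw [← hμ i, Measure.map_apply (hs i) (hA i)]

lemma pi_map_comp_equiv {N : ℕ} (μ : Measure ℝ) [IsProbabilityMeasure μ] (e : Fin N ≃ Fin N) :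
    MeasurePreserving (fun f : Fin N → ℝ => f ∘ e)
      (Measure.pi fun _ : Fin N => μ) (Measure.pi fun _ : Fin N => μ) := by
  have h := measurePreserving_piCongrLeft (μ := fun _ : Fin N => μ) (α := fun _ : Fin N => ℝ)
    e.symm
  have heq : (fun f : Fin N → ℝ => f ∘ e)
      = MeasurableEquiv.piCongrLeft (fun _ : Fin N => ℝ) e.symm := by
    funext g
    rw [MeasurableEquiv.coe_piCongrLeft]
    funext b
    have h2 := Equiv.piCongrLeft_apply_apply (fun _ : Fin N => ℝ) e.symm g (e b)
    simp only [Equiv.symm_symm, Equiv.symm_apply_apply] at h2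
    exact h2.symm
  rw [heq]
  exact h

end ScaledCP

/-- **Scaled conformal prediction coverage.**  If `(X i, U i)`, `i = 0, …, n`, are i.i.d.
pairs, `uθ` is a fixed measurable predictor, `σ` a fixed positive measurable scale function,
`α ∈ (0,1)`, `k = ⌈(1-α)(n+1)⌉ ≤ n`, and `q` is the `k`-th smallest of the scaled calibration
scores `|U i - uθ (X i)| / σ (X i)`, then the interval `[uθ x - q σ x, uθ x + q σ x]` covers
the test response with probability at least `1 - α`. -/
theorem scaled_cp_coverage
    {Ω : Type*} [MeasurableSpace Ω] (P : Measure Ω) [IsProbabilityMeasure P]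
    {d n : ℕ}
    (X : Fin (n + 1) → Ω → (Fin d → ℝ)) (U : Fin (n + 1) → Ω → ℝ)
    (hmeas : ∀ i, Measurable fun ω => (X i ω, U i ω))
    (hindep : iIndepFun (fun i ω => (X i ω, U i ω)) P)
    (hid : ∀ i j, IdentDistrib (fun ω => (X i ω, U i ω)) (fun ω => (X j ω, U j ω)) P P)
    (uθ : (Fin d → ℝ) → ℝ) (huθ : Measurable uθ)
    (σ : (Fin d → ℝ) → ℝ) (hσmeas : Measurable σ) (hσpos : ∀ x, 0 < σ x)
    (α : ℝ) (hα : α ∈ Set.Ioo (0 : ℝ) 1)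
    (k : ℕ) (hk : k = ⌈(1 - α) * (n + 1 : ℝ)⌉₊) (hkn : k ≤ n)
    (q : Ω → ℝ)
    (hq : ∀ ω, q ω =
      kthSmallest k
        (fun i : Fin n => |U i.castSucc ω - uθ (X i.castSucc ω)| / σ (X i.castSucc ω))) :
    ENNReal.ofReal (1 - α) ≤
      P {ω | uθ (X (Fin.last n) ω) - q ω * σ (X (Fin.last n) ω) ≤ U (Fin.last n) ω ∧
             U (Fin.last n) ω ≤ uθ (X (Fin.last n) ω) + q ω * σ (X (Fin.last n) ω)} := by
  classical
  open ScaledCP Finset in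
  obtain ⟨hα0, hα1⟩ := hα
  have hk1 : 1 ≤ k := by
    rw [hk]
    refine Nat.one_le_ceil_iff.mpr ?_
    have : (0:ℝ) < 1 - α := by linarith
    positivity
  -- the scaled score function
  set g : (Fin d → ℝ) × ℝ → ℝ := fun p => |p.2 - uθ p.1| / σ p.1 with hg_def
  have hg : Measurable g :=
    ((measurable_snd.sub (huθ.comp measurable_fst)).abs).div (hσmeas.comp measurable_fst)
  set s : Fin (n + 1) → Ω → ℝ := fun i ω => g (X i ω, U i ω) with hs_def
  have hs : ∀ i, Measurable (s i) := fun i => hg.comp (hmeas i)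
  have hsind : iIndepFun s P :=
    hindep.comp (fun _ => g) (fun _ => hg)
  set μ : Measure ℝ := P.map (s (Fin.last n)) with hμ_def
  haveI : IsProbabilityMeasure μ := Measure.isProbabilityMeasure_map (hs _).aemeasurable
  have hμi : ∀ i, P.map (s i) = μ := fun i => ((hid i (Fin.last n)).comp hg).map_eq
  set V : Ω → Fin (n + 1) → ℝ := fun ω i => s i ω with hV_def
  have hV : Measurable V := measurable_pi_lambda _ hs
  have hVlaw : P.map V = Measure.pi fun _ : Fin (n + 1) => μ :=
    map_pi_of_iid P s hs hsind μ hμi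
  set B : Fin (n + 1) → Set (Fin (n + 1) → ℝ) :=
    fun j => {f | (univ.filter fun i => f i < f j).card < k} with hB_def
  have hBmeas : ∀ j, MeasurableSet (B j) := fun j => measurableSet_B j
  -- all preimage probabilities are equal
  have hPeq : ∀ j, P (V ⁻¹' B j) = P (V ⁻¹' B (Fin.last n)) := by
    intro j
    have hmp := pi_map_comp_equiv (N := n + 1) μ (Equiv.swap j (Fin.last n))
    calc P (V ⁻¹' B j) = (P.map V) (B j) := (Measure.map_apply hV (hBmeas j)).symm
      _ = (Measure.pi fun _ => μ) (B j) := by rw [hVlaw]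
      _ = (Measure.pi fun _ => μ)
          ((fun f : Fin (n+1) → ℝ => f ∘ Equiv.swap j (Fin.last n)) ⁻¹' B (Fin.last n)) := by
          rw [hB_def]; rw [B_preimage_swap]
      _ = (Measure.pi fun _ => μ) (B (Fin.last n)) := by
          exact hmp.measure_preimage (hBmeas _).nullMeasurableSet
      _ = (P.map V) (B (Fin.last n)) := by rw [hVlaw]
      _ = P (V ⁻¹' B (Fin.last n)) := Measure.map_apply hV (hBmeas _)
  -- sum lower bound via pointwise pigeonhole
  have hpoint : ∀ ω, (k : ℝ≥0∞) ≤
      ∑ j : Fin (n + 1), (V ⁻¹' B j).indicator (1 : Ω → ℝ≥0∞) ω := by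
    intro ω
    have hcard := card_rank_lt (k := k) (le_trans hkn (Nat.le_succ n)) (V ω)
    calc (k : ℝ≥0∞)
        ≤ ((univ.filter fun j : Fin (n+1) =>
            (univ.filter fun i => V ω i < V ω j).card < k).card : ℝ≥0∞) := by
          exact_mod_cast hcard
      _ = ∑ j : Fin (n + 1), (V ⁻¹' B j).indicator (1 : Ω → ℝ≥0∞) ω := by
          rw [Finset.card_filter]
          push_cast
          refine Finset.sum_congr rfl fun j _ => ?_
          by_cases hj : (univ.filter fun i => V ω i < V ω j).card < k
          · rw [if_pos hj, Set.indicator_of_mem]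
            · rfl
            · exact hj
          · rw [if_neg hj, Set.indicator_of_notMem]
            exact hj
  have hsum : (k : ℝ≥0∞) ≤ ∑ j : Fin (n + 1), P (V ⁻¹' B j) := by
    have h1 : (k : ℝ≥0∞) = ∫⁻ _, (k : ℝ≥0∞) ∂P := by simp
    rw [h1]
    calc ∫⁻ _, (k : ℝ≥0∞) ∂P
        ≤ ∫⁻ ω, ∑ j : Fin (n + 1), (V ⁻¹' B j).indicator (1 : Ω → ℝ≥0∞) ω ∂P :=
          lintegral_mono hpoint
      _ = ∑ j : Fin (n + 1), ∫⁻ ω, (V ⁻¹' B j).indicator (1 : Ω → ℝ≥0∞) ω ∂P :=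
          lintegral_finset_sum _ fun j _ => measurable_one.indicator (hV (hBmeas j))
      _ = ∑ j : Fin (n + 1), P (V ⁻¹' B j) :=
          Finset.sum_congr rfl fun j _ => lintegral_indicator_one (hV (hBmeas j))
  have hNp : (k : ℝ≥0∞) ≤ P (V ⁻¹' B (Fin.last n)) * ((n + 1 : ℕ) : ℝ≥0∞) := by
    refine le_trans hsum ?_
    rw [Finset.sum_congr rfl fun j _ => hPeq j, Finset.sum_const, Finset.card_univ,
      Fintype.card_fin, nsmul_eq_mul, mul_comm]
  have hp : ((k : ℝ≥0∞) / ((n + 1 : ℕ) : ℝ≥0∞)) ≤ P (V ⁻¹' B (Fin.last n)) :=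
    ENNReal.div_le_of_le_mul hNp
  -- identify the coverage event
  have hev : {ω | uθ (X (Fin.last n) ω) - q ω * σ (X (Fin.last n) ω) ≤ U (Fin.last n) ω ∧
               U (Fin.last n) ω ≤ uθ (X (Fin.last n) ω) + q ω * σ (X (Fin.last n) ω)}
      = V ⁻¹' B (Fin.last n) := by
    ext ω
    simp only [Set.mem_setOf_eq, Set.mem_preimage, hB_def]
    have hstep1 : (uθ (X (Fin.last n) ω) - q ω * σ (X (Fin.last n) ω) ≤ U (Fin.last n) ω ∧
        U (Fin.last n) ω ≤ uθ (X (Fin.last n) ω) + q ω * σ (X (Fin.last n) ω))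
        ↔ s (Fin.last n) ω ≤ q ω := by
      rw [hs_def]
      simp only [hg_def]
      rw [div_le_iff₀ (hσpos _), abs_le]
      constructor
      · rintro ⟨h1, h2⟩; constructor <;> linarith
      · rintro ⟨h1, h2⟩; constructor <;> linarith
    rw [hstep1, hq ω]
    have hqf : (fun i : Fin n => |U i.castSucc ω - uθ (X i.castSucc ω)| / σ (X i.castSucc ω))
        = fun i : Fin n => s i.castSucc ω := rfl
    rw [hqf, le_kthSmallest_iff hk1 hkn]
    have hcount : (univ.filter fun i : Fin n => s i.castSucc ω < s (Fin.last n) ω).card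
        = (univ.filter fun i : Fin (n+1) => V ω i < V ω (Fin.last n)).card := by
      rw [Fin.univ_castSuccEmb, Finset.filter_cons, if_neg (by simp), Finset.filter_map,
        Finset.card_map]
      rfl
    rw [hcount]
  rw [hev]
  refine le_trans ?_ hp
  have hr : (1 - α) ≤ (k : ℝ) / ((n + 1 : ℕ) : ℝ) := by
    rw [le_div_iff₀ (by positivity)]
    rw [hk]
    have := Nat.le_ceil ((1 - α) * ((n : ℝ) + 1))
    push_cast
    push_cast at this
    linarith
  calc ENNReal.ofReal (1 - α)
      ≤ ENNReal.ofReal ((k : ℝ) / ((n + 1 : ℕ) : ℝ)) := ENNReal.ofReal_le_ofReal hr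
    _ = (k : ℝ≥0∞) / ((n + 1 : ℕ) : ℝ≥0∞) := by
        rw [ENNReal.ofReal_div_of_pos (by positivity), ENNReal.ofReal_natCast,
          ENNReal.ofReal_natCast]
end

section
/- Let (X_1,U_1),...,(X_n,U_n),(X_{n+1},U_{n+1}) be i.i.d. random pairs with values in ℝ^d × ℝ, let u_θ : ℝ^d → ℝ be a fixed measurable predictor, let σ : ℝ^d → ℝ be a fixed measurable function with σ(x) > 0 for all x, and fix α ∈ (0,1) with k := ⌈(1−α)(n+1)⌉ ≤ n. Define s_i = |U_i − u_θ(X_i)| / σ(X_i), let q be the k-th smallest value among s_1,...,s_n, and let I(x) = [u_θ(x) − q σ(x), u_θ(x) + q σ(x)]. If the common distribution of the scaled score s = |U − u_θ(X)| / σ(X) is atomless (continuous), then P( U_{n+1} ∈ I(X_{n+1}) ) ≤ 1 − α + 1/(n+1). -/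
open MeasureTheory ProbabilityTheory

lemma kth_le_iff {n k : ℕ} (hk1 : 1 ≤ k) (hkn : k ≤ n) (f : Fin n → ℝ) (t : ℝ) :
    t ≤ kthSmallest k f ↔ (Finset.univ.filter fun i => f i < t).card + 1 ≤ k := by
  have hn : 0 < n := lt_of_lt_of_le hk1 hkn
  set S : Set ℝ := {u : ℝ | k ≤ (Finset.univ.filter fun i => f i ≤ u).card} with hS
  have himg : (Finset.univ.image f).Nonempty := by
    simp [Finset.image_nonempty, Finset.univ_nonempty_iff, Fin.pos_iff_nonempty.mp hn]
  have hSne : S.Nonempty := by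
    refine ⟨(Finset.univ.image f).max' himg, ?_⟩
    have : (Finset.univ.filter fun i => f i ≤ (Finset.univ.image f).max' himg) = Finset.univ := by
      refine Finset.eq_univ_of_forall fun i => ?_
      simp only [Finset.mem_filter, Finset.mem_univ, true_and]
      exact Finset.le_max' _ _ (Finset.mem_image_of_mem f (Finset.mem_univ i))
    simp only [hS, Set.mem_setOf_eq, this, Finset.card_univ, Fintype.card_fin]
    exact hkn
  have hbdd : BddBelow S := by
    refine ⟨(Finset.univ.image f).min' himg, fun u hu => ?_⟩
    have hpos : 0 < (Finset.univ.filter fun i => f i ≤ u).card := lt_of_lt_of_le hk1 hu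
    obtain ⟨i, hi⟩ := Finset.card_pos.mp hpos
    simp only [Finset.mem_filter] at hi
    exact le_trans (Finset.min'_le _ _ (Finset.mem_image_of_mem f (Finset.mem_univ i))) hi.2
  constructor
  · intro ht
    by_contra hc
    push_neg at hc
    have hkc : k ≤ (Finset.univ.filter fun i => f i < t).card := by omega
    have hpos : 0 < (Finset.univ.filter fun i => f i < t).card := lt_of_lt_of_le hk1 hkc
    obtain ⟨i0, hi0⟩ := Finset.card_pos.mp hpos
    have himg2 : ((Finset.univ.filter fun i => f i < t).image f).Nonempty :=
      ⟨f i0, Finset.mem_image_of_mem f hi0⟩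
    set u := ((Finset.univ.filter fun i => f i < t).image f).max' himg2 with hu
    have hult : u < t := by
      obtain ⟨i, hi, hfi⟩ := Finset.mem_image.mp (Finset.max'_mem _ himg2)
      rw [hu, ← hfi]
      exact (Finset.mem_filter.mp hi).2
    have hsub : (Finset.univ.filter fun i => f i < t) ⊆ (Finset.univ.filter fun i => f i ≤ u) := by
      intro i hi
      simp only [Finset.mem_filter, Finset.mem_univ, true_and] at hi ⊢
      exact Finset.le_max' _ _ (Finset.mem_image.mpr ⟨i, by simp [hi], rfl⟩)
    have huS : u ∈ S := le_trans hkc (Finset.card_le_card hsub)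
    have := csInf_le hbdd huS
    unfold kthSmallest at ht
    linarith
  · intro hc
    refine le_csInf hSne fun u hu => ?_
    by_contra hlt
    push_neg at hlt
    have hsub : (Finset.univ.filter fun i => f i ≤ u) ⊆ (Finset.univ.filter fun i => f i < t) := by
      intro i hi
      simp only [Finset.mem_filter, Finset.mem_univ, true_and] at hi ⊢
      exact lt_of_le_of_lt hi hlt
    have := le_trans hu (Finset.card_le_card hsub)
    omega

lemma measurable_rankCount {N : ℕ} (i0 : Fin N) :
    Measurable fun v : Fin N → ℝ => (Finset.univ.filter fun m => v m ≤ v i0).card := by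
  have h : (fun v : Fin N → ℝ => (Finset.univ.filter fun m => v m ≤ v i0).card)
      = fun v => ∑ m : Fin N, if v m ≤ v i0 then 1 else 0 := by
    funext v; rw [Finset.card_filter]
  rw [h]
  exact Finset.measurable_sum _ fun m _ =>
    Measurable.ite (measurableSet_le (measurable_pi_apply m) (measurable_pi_apply i0))
      measurable_const measurable_const

lemma rank_existsUnique {N : ℕ} (v : Fin N → ℝ) (hv : ∀ i j : Fin N, i ≠ j → v i ≠ v j)
    (j : ℕ) (hj1 : 1 ≤ j) (hjN : j ≤ N) :
    ∃! i : Fin N, (Finset.univ.filter fun m => v m ≤ v i).card = j := by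
  set r : Fin N → ℕ := fun i => (Finset.univ.filter fun m => v m ≤ v i).card with hr
  have hlt : ∀ a b : Fin N, v a < v b → r a < r b := by
    intro a b hab
    refine Finset.card_lt_card ?_
    rw [Finset.ssubset_iff_of_subset]
    · exact ⟨b, by simp, by simp; linarith⟩
    · intro m hm
      simp only [Finset.mem_filter, Finset.mem_univ, true_and] at hm ⊢
      linarith
  have hinj : Function.Injective r := by
    intro a b hab
    by_contra hne
    rcases lt_or_gt_of_ne (hv a b hne) with h | h
    · exact absurd hab (Nat.ne_of_lt (hlt a b h))
    · exact absurd hab.symm (Nat.ne_of_lt (hlt b a h))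
  have hmem : ∀ i, r i ∈ Finset.Icc 1 N := by
    intro i
    rw [Finset.mem_Icc]
    constructor
    · exact Finset.card_pos.mpr ⟨i, by simp⟩
    · exact le_trans (Finset.card_filter_le _ _) (by simp)
  have himg : Finset.univ.image r = Finset.Icc 1 N := by
    refine Finset.eq_of_subset_of_card_le ?_ ?_
    · intro x hx
      obtain ⟨i, _, hi⟩ := Finset.mem_image.mp hx
      exact hi ▸ hmem i
    · rw [Finset.card_image_of_injective _ hinj, Nat.card_Icc]
      simp
  have hjmem : j ∈ Finset.univ.image r := by
    rw [himg, Finset.mem_Icc]; exact ⟨hj1, hjN⟩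
  obtain ⟨i, _, hi⟩ := Finset.mem_image.mp hjmem
  exact ⟨i, hi, fun y hy => hinj (hy.trans hi.symm)⟩

/-- **Scaled conformal prediction upper coverage bound.**  Under the i.i.d. assumptions of
scaled conformal prediction, if in addition the common distribution of the scaled score
`|U - uθ X| / σ X` is atomless, then the coverage probability is at most
`1 - α + 1/(n+1)`. -/
theorem scaled_cp_upper_coverage
    {Ω : Type*} [MeasurableSpace Ω] (P : Measure Ω) [IsProbabilityMeasure P]
    {d n : ℕ}
    (X : Fin (n + 1) → Ω → (Fin d → ℝ)) (U : Fin (n + 1) → Ω → ℝ)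
    (hmeas : ∀ i, Measurable fun ω => (X i ω, U i ω))
    (hindep : iIndepFun (fun i ω => (X i ω, U i ω)) P)
    (hid : ∀ i j, IdentDistrib (fun ω => (X i ω, U i ω)) (fun ω => (X j ω, U j ω)) P P)
    (uθ : (Fin d → ℝ) → ℝ) (huθ : Measurable uθ)
    (σ : (Fin d → ℝ) → ℝ) (hσmeas : Measurable σ) (hσpos : ∀ x, 0 < σ x)
    (hatomless : ∀ (i : Fin (n + 1)) (c : ℝ),
      P {ω | |U i ω - uθ (X i ω)| / σ (X i ω) = c} = 0)
    (α : ℝ) (hα : α ∈ Set.Ioo (0 : ℝ) 1)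
    (k : ℕ) (hk : k = ⌈(1 - α) * (n + 1 : ℝ)⌉₊) (hkn : k ≤ n)
    (q : Ω → ℝ)
    (hq : ∀ ω, q ω =
      kthSmallest k
        (fun i : Fin n => |U i.castSucc ω - uθ (X i.castSucc ω)| / σ (X i.castSucc ω))) :
    P {ω | uθ (X (Fin.last n) ω) - q ω * σ (X (Fin.last n) ω) ≤ U (Fin.last n) ω ∧
           U (Fin.last n) ω ≤ uθ (X (Fin.last n) ω) + q ω * σ (X (Fin.last n) ω)} ≤
      ENNReal.ofReal (1 - α + 1 / (n + 1 : ℝ)) := by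
  obtain ⟨hα0, hα1⟩ := hα
  -- the scaled scores
  set s : Fin (n + 1) → Ω → ℝ := fun i ω => |U i ω - uθ (X i ω)| / σ (X i ω) with hs
  have hqs : ∀ ω, q ω = kthSmallest k (fun i : Fin n => s i.castSucc ω) := hq
  have hg : Measurable fun p : (Fin d → ℝ) × ℝ => |p.2 - uθ p.1| / σ p.1 :=
    ((measurable_snd.sub (huθ.comp measurable_fst)).abs).div (hσmeas.comp measurable_fst)
  have hsmeas : ∀ i, Measurable (s i) := fun i => hg.comp (hmeas i)
  have hsindep : iIndepFun s P :=
    hindep.comp (fun _ p => |p.2 - uθ p.1| / σ p.1) fun _ => hg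
  have hsid : ∀ i j, IdentDistrib (s i) (s j) P P := fun i j => (hid i j).comp hg
  set μ : Measure ℝ := Measure.map (s (Fin.last n)) P with hμdef
  have hμprob : IsProbabilityMeasure μ := Measure.isProbabilityMeasure_map (hsmeas _).aemeasurable
  have hmarg : ∀ (i) (B : Set ℝ), MeasurableSet B → P (s i ⁻¹' B) = μ B := by
    intro i B hB
    rw [hμdef, ← (hsid i (Fin.last n)).map_eq, Measure.map_apply (hsmeas i) hB]
  -- the joint law of any permuted score vector is the product measure
  have hvec : ∀ τ : Equiv.Perm (Fin (n + 1)), Measurable fun ω (m : Fin (n + 1)) => s (τ m) ω :=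
    fun τ => measurable_pi_lambda _ fun m => hsmeas (τ m)
  have hjoint : ∀ τ : Equiv.Perm (Fin (n + 1)),
      Measure.map (fun ω (m : Fin (n + 1)) => s (τ m) ω) P
        = Measure.pi fun _ : Fin (n + 1) => μ := by
    intro τ
    haveI : ∀ i : Fin (n + 1), SigmaFinite ((fun _ : Fin (n + 1) => μ) i) :=
      fun _ => inferInstance
    refine (Measure.pi_eq fun B hB => ?_).symm
    rw [Measure.map_apply (hvec τ) (MeasurableSet.univ_pi hB)]
    have h1 : (fun ω (m : Fin (n + 1)) => s (τ m) ω) ⁻¹' Set.pi Set.univ B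
        = ⋂ j, s j ⁻¹' B (τ.symm j) := by
      ext ω
      simp only [Set.mem_preimage, Set.mem_pi, Set.mem_univ, true_implies, Set.mem_iInter]
      constructor
      · intro h j; simpa using h (τ.symm j)
      · intro h m; simpa using h (τ m)
    have h2 : (⋂ j, s j ⁻¹' B (τ.symm j)) = ⋂ j ∈ Finset.univ, s j ⁻¹' B (τ.symm j) := by
      simp
    rw [h1, h2, hsindep.measure_inter_preimage_eq_mul Finset.univ
      (sets := fun j => B (τ.symm j)) fun j _ => hB _]
    calc ∏ j, P (s j ⁻¹' B (τ.symm j)) = ∏ j, μ (B (τ.symm j)) :=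
          Finset.prod_congr rfl fun j _ => hmarg j _ (hB _)
      _ = ∏ m, μ (B m) := Equiv.prod_comp τ.symm fun m => μ (B m)
  -- rank functions
  set rnk : Fin (n + 1) → Ω → ℕ :=
    fun i ω => (Finset.univ.filter fun m => s m ω ≤ s i ω).card with hrnkdef
  have hrnkmeas : ∀ (i : Fin (n + 1)) (j : ℕ), MeasurableSet {ω | rnk i ω = j} := by
    intro i j
    have hm : Measurable (rnk i) :=
      (measurable_rankCount i).comp (measurable_pi_lambda _ fun m => hsmeas m)
    exact hm (measurableSet_singleton j)
  set A : ℕ → Set (Fin (n + 1) → ℝ) := fun j =>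
    (fun v : Fin (n + 1) → ℝ => (Finset.univ.filter fun m => v m ≤ v (Fin.last n)).card) ⁻¹' {j}
    with hA
  have hAmeas : ∀ j, MeasurableSet (A j) :=
    fun j => measurable_rankCount (Fin.last n) (measurableSet_singleton j)
  -- exchangeability: the law of each rank is the same
  have hEi : ∀ (i : Fin (n + 1)) (j : ℕ),
      P {ω | rnk i ω = j} = Measure.pi (fun _ : Fin (n + 1) => μ) (A j) := by
    intro i j
    have hpre : {ω | rnk i ω = j}
        = (fun ω (m : Fin (n + 1)) => s (Equiv.swap i (Fin.last n) m) ω) ⁻¹' A j := by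
      ext ω
      simp only [hA, Set.mem_setOf_eq, Set.mem_preimage, Set.mem_singleton_iff]
      have hcard : (Finset.univ.filter fun m => s (Equiv.swap i (Fin.last n) m) ω
            ≤ s (Equiv.swap i (Fin.last n) (Fin.last n)) ω).card
          = (Finset.univ.filter fun m => s m ω ≤ s i ω).card := by
        rw [Equiv.swap_apply_right, Finset.card_filter, Finset.card_filter]
        exact Fintype.sum_equiv (Equiv.swap i (Fin.last n)) _ _ fun m => rfl
      simp only [hrnkdef]
      constructor
      · intro h; rw [hcard]; exact h
      · intro h; rw [← hcard]; exact h
    rw [hpre, ← Measure.map_apply (hvec (Equiv.swap i (Fin.last n))) (hAmeas j),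
      hjoint (Equiv.swap i (Fin.last n))]
  -- ties are null
  have hdiff : ∀ i j : Fin (n + 1), i ≠ j → P {ω | s i ω = s j ω} = 0 := by
    intro i j hij
    have hind : IndepFun (s i) (s j) P := hsindep.indepFun hij
    have hmap : P.map (fun ω => (s i ω, s j ω)) = (P.map (s i)).prod (P.map (s j)) :=
      (indepFun_iff_map_prod_eq_prod_map_map (hsmeas i).aemeasurable
        (hsmeas j).aemeasurable).mp hind
    have hdiag : MeasurableSet {p : ℝ × ℝ | p.1 = p.2} :=
      measurableSet_eq_fun measurable_fst measurable_snd
    have h1 : {ω | s i ω = s j ω} = (fun ω => (s i ω, s j ω)) ⁻¹' {p : ℝ × ℝ | p.1 = p.2} := rfl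
    rw [h1, ← Measure.map_apply ((hsmeas i).prodMk (hsmeas j)) hdiag, hmap,
      Measure.prod_apply hdiag]
    have hzero : ∀ x : ℝ, (P.map (s j)) (Prod.mk x ⁻¹' {p : ℝ × ℝ | p.1 = p.2}) = 0 := by
      intro x
      have hx : (Prod.mk x ⁻¹' {p : ℝ × ℝ | p.1 = p.2}) = {x} := by
        ext y; simp [eq_comm]
      rw [hx, Measure.map_apply (hsmeas j) (measurableSet_singleton x)]
      exact hatomless j x
    have hzero' : ∀ x : ℝ, (P.map (s j)) {x} = 0 := by
      intro x
      rw [Measure.map_apply (hsmeas j) (measurableSet_singleton x)]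
      exact hatomless j x
    simp [hzero, hzero']
  set Dbad : Set Ω :=
    ⋃ p : Fin (n + 1) × Fin (n + 1), ⋃ _ : p.1 ≠ p.2, {ω | s p.1 ω = s p.2 ω} with hDbaddef
  have hDbadmeas : MeasurableSet Dbad :=
    MeasurableSet.iUnion fun p => MeasurableSet.iUnion fun _ =>
      measurableSet_eq_fun (hsmeas p.1) (hsmeas p.2)
  have hDbad0 : P Dbad = 0 :=
    measure_iUnion_null fun p => measure_iUnion_null fun hp => hdiff p.1 p.2 hp
  have hgood : ∀ ω, ω ∉ Dbad → ∀ i j : Fin (n + 1), i ≠ j → s i ω ≠ s j ω := by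
    intro ω hω i j hij heq
    exact hω (Set.mem_iUnion.mpr ⟨(i, j), Set.mem_iUnion.mpr ⟨hij, heq⟩⟩)
  -- each rank value in [1, n+1] has probability 1/(n+1)
  have hkey : ∀ j : ℕ, 1 ≤ j → j ≤ n + 1 →
      P {ω | rnk (Fin.last n) ω = j} = 1 / ((n : ENNReal) + 1) := by
    intro j hj1 hjn
    set F : Fin (n + 1) → Set Ω := fun i => {ω | rnk i ω = j} ∩ Dbadᶜ with hF
    have hFmeas : ∀ i, MeasurableSet (F i) := fun i => (hrnkmeas i j).inter hDbadmeas.compl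
    have hFdisj : Pairwise (Function.onFun Disjoint F) := by
      intro a b hab
      simp only [Function.onFun, Set.disjoint_left]
      rintro ω ⟨ha, hgω⟩ ⟨hb, _⟩
      have hEU := rank_existsUnique (fun m => s m ω)
        (fun i j hij => hgood ω hgω i j hij) j hj1 hjn
      exact hab (hEU.unique ha hb)
    have hFunion : (⋃ i, F i) = Dbadᶜ := by
      ext ω
      simp only [hF, Set.mem_iUnion, Set.mem_inter_iff, Set.mem_setOf_eq, Set.mem_compl_iff]
      constructor
      · rintro ⟨i, _, h⟩; exact h
      · intro hω
        obtain ⟨i, hi, _⟩ := rank_existsUnique (fun m => s m ω)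
          (fun a b hab => hgood ω hω a b hab) j hj1 hjn
        exact ⟨i, hi, hω⟩
    have hPDc : P Dbadᶜ = 1 := by
      rw [measure_compl hDbadmeas (measure_ne_top P _), hDbad0, measure_univ, tsub_zero]
    have hsumF : ∑ i : Fin (n + 1), P (F i) = 1 := by
      rw [← tsum_fintype (L := SummationFilter.unconditional _) (fun i => P (F i)), ← measure_iUnion hFdisj hFmeas, hFunion, hPDc]
    have hPF : ∀ i, P (F i) = P {ω | rnk i ω = j} := by
      intro i
      refine le_antisymm (measure_mono Set.inter_subset_left) ?_
      have hsub : {ω | rnk i ω = j} ⊆ F i ∪ Dbad := by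
        intro ω hω
        by_cases h : ω ∈ Dbad
        · exact Or.inr h
        · exact Or.inl ⟨hω, h⟩
      calc P {ω | rnk i ω = j} ≤ P (F i ∪ Dbad) := measure_mono hsub
        _ ≤ P (F i) + P Dbad := measure_union_le _ _
        _ = P (F i) := by rw [hDbad0, add_zero]
    have hsumE : ∑ i : Fin (n + 1), P {ω | rnk i ω = j} = 1 := by
      rw [← hsumF]; exact Finset.sum_congr rfl fun i _ => (hPF i).symm
    have hconst : ∑ i : Fin (n + 1), P {ω | rnk i ω = j}
        = ((n : ENNReal) + 1) * Measure.pi (fun _ : Fin (n + 1) => μ) (A j) := by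
      rw [Finset.sum_congr rfl fun i _ => hEi i j, Finset.sum_const, Finset.card_univ,
        Fintype.card_fin, nsmul_eq_mul]
      push_cast
      ring
    have hpival : Measure.pi (fun _ : Fin (n + 1) => μ) (A j) = 1 / ((n : ENNReal) + 1) := by
      rw [ENNReal.eq_div_iff (by simp) (by simp)]
      rw [← hconst, hsumE]
    rw [hEi (Fin.last n) j, hpival]
  -- k is at least 1
  have hkpos : 1 ≤ k := by
    rw [hk, Nat.one_le_ceil_iff]
    have : (0 : ℝ) < 1 - α := by linarith
    positivity
  -- the coverage event is (up to ties) the event that the last rank is at most k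
  have hcov : {ω | uθ (X (Fin.last n) ω) - q ω * σ (X (Fin.last n) ω) ≤ U (Fin.last n) ω ∧
        U (Fin.last n) ω ≤ uθ (X (Fin.last n) ω) + q ω * σ (X (Fin.last n) ω)}
      ⊆ {ω | rnk (Fin.last n) ω ≤ k} ∪ Dbad := by
    intro ω hω
    by_cases hbad : ω ∈ Dbad
    · exact Or.inr hbad
    left
    obtain ⟨h1, h2⟩ := hω
    have hσp := hσpos (X (Fin.last n) ω)
    have habs : |U (Fin.last n) ω - uθ (X (Fin.last n) ω)| ≤ q ω * σ (X (Fin.last n) ω) :=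
      abs_le.mpr ⟨by linarith, by linarith⟩
    have ht : s (Fin.last n) ω ≤ q ω := (div_le_iff₀ hσp).mpr habs
    have ht' : s (Fin.last n) ω ≤ kthSmallest k (fun i : Fin n => s i.castSucc ω) :=
      (hqs ω) ▸ ht
    have hcount := (kth_le_iff hkpos hkn (fun i : Fin n => s i.castSucc ω)
      (s (Fin.last n) ω)).mp ht'
    have hrnkval : rnk (Fin.last n) ω
        = (Finset.univ.filter fun i : Fin n => s i.castSucc ω < s (Fin.last n) ω).card + 1 := by
      simp only [hrnkdef]
      rw [Finset.card_filter, Fin.sum_univ_castSucc]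
      simp only [le_refl, if_true]
      congr 1
      rw [← Finset.card_filter]
      refine congrArg Finset.card (Finset.filter_congr fun i _ => ?_)
      have hne : s i.castSucc ω ≠ s (Fin.last n) ω :=
        hgood ω hbad _ _ (Fin.castSucc_lt_last i).ne
      constructor
      · intro h; exact lt_of_le_of_ne h hne
      · intro h; exact le_of_lt h
    show rnk (Fin.last n) ω ≤ k
    omega
  -- split the rank event and sum
  have hranksplit : {ω | rnk (Fin.last n) ω ≤ k}
      = ⋃ j ∈ Finset.Icc 1 k, {ω | rnk (Fin.last n) ω = j} := by
    ext ω
    simp only [Set.mem_setOf_eq, Set.mem_iUnion, Finset.mem_Icc, exists_prop]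
    constructor
    · intro h
      refine ⟨rnk (Fin.last n) ω, ⟨?_, h⟩, rfl⟩
      simp only [hrnkdef]
      exact Finset.card_pos.mpr ⟨Fin.last n, by simp⟩
    · rintro ⟨j, ⟨hj1, hjk⟩, hje⟩
      omega
  have hPrank : P {ω | rnk (Fin.last n) ω ≤ k} = (k : ENNReal) * (1 / ((n : ENNReal) + 1)) := by
    rw [hranksplit, measure_biUnion_finset ?_ fun j _ => hrnkmeas _ j]
    · rw [Finset.sum_congr rfl fun j hj => hkey j (Finset.mem_Icc.mp hj).1
        (le_trans (Finset.mem_Icc.mp hj).2 (by omega))]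
      rw [Finset.sum_const, Nat.card_Icc, nsmul_eq_mul]
      norm_num
    · intro a ha b hb hab
      simp only [Set.disjoint_left, Set.mem_setOf_eq]
      intro ω h1 h2
      exact hab (h1.symm.trans h2)
  -- final arithmetic
  have hfin : (k : ENNReal) * (1 / ((n : ENNReal) + 1))
      ≤ ENNReal.ofReal (1 - α + 1 / (n + 1 : ℝ)) := by
    have hn1 : (0 : ℝ) < (n : ℝ) + 1 := by positivity
    have h1 : (k : ℝ) ≤ (1 - α) * (n + 1) + 1 := by
      rw [hk]
      have hnonneg : (0 : ℝ) ≤ (1 - α) * (n + 1) := by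
        have : (0 : ℝ) < 1 - α := by linarith
        positivity
      exact_mod_cast le_of_lt (Nat.ceil_lt_add_one hnonneg)
    have h2 : (k : ℝ) / ((n : ℝ) + 1) ≤ 1 - α + 1 / (n + 1 : ℝ) := by
      rw [div_le_iff₀ hn1]
      have hmul : (1 - α + 1 / (n + 1 : ℝ)) * ((n : ℝ) + 1) = (1 - α) * (n + 1) + 1 := by
        field_simp
      rw [hmul]
      exact h1
    calc (k : ENNReal) * (1 / ((n : ENNReal) + 1))
        = ENNReal.ofReal ((k : ℝ) / ((n : ℝ) + 1)) := by
          rw [ENNReal.ofReal_div_of_pos hn1, ENNReal.ofReal_natCast,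
            ENNReal.ofReal_add (by positivity : (0:ℝ) ≤ (n : ℝ)) (by norm_num : (0:ℝ) ≤ 1),
            ENNReal.ofReal_natCast, ENNReal.ofReal_one, one_div, div_eq_mul_inv]
      _ ≤ ENNReal.ofReal (1 - α + 1 / (n + 1 : ℝ)) := ENNReal.ofReal_le_ofReal h2
  calc P {ω | uθ (X (Fin.last n) ω) - q ω * σ (X (Fin.last n) ω) ≤ U (Fin.last n) ω ∧
        U (Fin.last n) ω ≤ uθ (X (Fin.last n) ω) + q ω * σ (X (Fin.last n) ω)}
      ≤ P ({ω | rnk (Fin.last n) ω ≤ k} ∪ Dbad) := measure_mono hcov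
    _ ≤ P {ω | rnk (Fin.last n) ω ≤ k} + P Dbad := measure_union_le _ _
    _ = (k : ENNReal) * (1 / ((n : ENNReal) + 1)) := by rw [hDbad0, add_zero, hPrank]
    _ ≤ ENNReal.ofReal (1 - α + 1 / (n + 1 : ℝ)) := hfin
end

section
/- Let (X_1,U_1),...,(X_N,U_N),(X_{N+1},U_{N+1}) be i.i.d. random pairs with values in ℝ^d × ℝ, let u_θ : ℝ^d → ℝ be a fixed measurable predictor, and let σ : ℝ^d → ℝ and g : ℝ^d → ℝ be fixed measurable functions that are strictly positive everywhere. Fix α ∈ (0,1) with k := ⌈(N+1)(1−α)⌉ ≤ N. Define ℓ_j = |U_j − u_θ(X_j)| / ( g(X_j) σ(X_j) ) for j = 1,...,N, let ℓ* be the k-th smallest value among ℓ_1,...,ℓ_N, and let I(x) = [u_θ(x) − ℓ* g(x) σ(x), u_θ(x) + ℓ* g(x) σ(x)]. If the common distribution of the localized score ℓ = |U − u_θ(X)| / ( g(X) σ(X) ) is atomless (continuous), then P( U_{N+1} ∈ I(X_{N+1}) ) = k/(N+1), and this value lies in the interval [1 − α, 1 − α + 1/(N+1)). -/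
open MeasureTheory ProbabilityTheory
open scoped ENNReal NNReal

namespace LocalCP


open Finset

/-- rank of coordinate `i` among the values of `v`. -/
noncomputable def rank {n : ℕ} (v : Fin n → ℝ) (i : Fin n) : ℕ :=
  (Finset.univ.filter fun j => v j ≤ v i).card

lemma one_le_rank {n : ℕ} (v : Fin n → ℝ) (i : Fin n) : 1 ≤ rank v i :=
  Finset.card_pos.mpr ⟨i, by simp [rank]⟩

lemma rank_le {n : ℕ} (v : Fin n → ℝ) (i : Fin n) : rank v i ≤ n :=
  le_trans (Finset.card_filter_le _ _) (by simp)

lemma rank_lt_rank {n : ℕ} {v : Fin n → ℝ} {i j : Fin n} (h : v i < v j) :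
    rank v i < rank v j := by
  apply Finset.card_lt_card
  constructor
  · intro l hl
    simp only [Finset.mem_filter, Finset.mem_univ, true_and] at hl ⊢
    exact hl.trans h.le
  · intro hsub
    have := hsub (by simp : j ∈ Finset.univ.filter fun l => v l ≤ v j)
    simp only [Finset.mem_filter, Finset.mem_univ, true_and] at this
    exact absurd (lt_of_le_of_lt this h) (lt_irrefl _)

lemma rank_injective {n : ℕ} {v : Fin n → ℝ} (hv : Function.Injective v) :
    Function.Injective (rank v) := by
  intro i j hij
  by_contra hne
  rcases lt_trichotomy (v i) (v j) with h | h | h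
  · exact absurd hij (Nat.ne_of_lt (rank_lt_rank h))
  · exact hne (hv h)
  · exact absurd hij.symm (Nat.ne_of_lt (rank_lt_rank h))

lemma rank_image {n : ℕ} {v : Fin n → ℝ} (hv : Function.Injective v) :
    Finset.univ.image (rank v) = Finset.Icc 1 n := by
  apply Finset.eq_of_subset_of_card_le
  · intro r hr
    simp only [Finset.mem_image, Finset.mem_univ, true_and] at hr
    obtain ⟨i, rfl⟩ := hr
    exact Finset.mem_Icc.mpr ⟨one_le_rank v i, rank_le v i⟩
  · rw [Nat.card_Icc, Finset.card_image_of_injective _ (rank_injective hv),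
      Finset.card_univ, Fintype.card_fin]
    omega

lemma existsUnique_rank {n : ℕ} {v : Fin n → ℝ} (hv : Function.Injective v)
    {r : ℕ} (h1 : 1 ≤ r) (h2 : r ≤ n) : ∃! i : Fin n, rank v i = r := by
  have hr : r ∈ Finset.univ.image (rank v) := by
    rw [rank_image hv]; exact Finset.mem_Icc.mpr ⟨h1, h2⟩
  simp only [Finset.mem_image, Finset.mem_univ, true_and] at hr
  obtain ⟨i, hi⟩ := hr
  exact ⟨i, hi, fun j hj => rank_injective hv (hj.trans hi.symm)⟩

lemma le_kthSmallest_iff {N k : ℕ} (hk1 : 1 ≤ k) (hkN : k ≤ N)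
    (v : Fin (N + 1) → ℝ) (hv : Function.Injective v) :
    v (Fin.last N) ≤ kthSmallest k (fun j : Fin N => v j.castSucc) ↔
      rank v (Fin.last N) ≤ k := by
  set w : Fin N → ℝ := fun j => v j.castSucc with hw
  set a : ℝ := v (Fin.last N) with ha
  have hne : ∀ j : Fin N, w j ≠ a := by
    intro j h
    exact absurd (hv h) (Fin.castSucc_lt_last j).ne
  have hrank : rank v (Fin.last N) =
      (Finset.univ.filter fun j : Fin N => w j ≤ a).card + 1 := by
    unfold rank
    rw [Finset.card_filter, Finset.card_filter, Fin.sum_univ_castSucc]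
    simp [hw, ha]
  set c : ℕ := (Finset.univ.filter fun j : Fin N => w j ≤ a).card with hc
  have hN : 0 < N := lt_of_lt_of_le hk1 hkN
  haveI : Nonempty (Fin N) := ⟨⟨0, hN⟩⟩
  set Sset : Set ℝ := {t : ℝ | k ≤ (Finset.univ.filter fun i => w i ≤ t).card} with hS
  have hSne : Sset.Nonempty := by
    refine ⟨Finset.univ.sup' Finset.univ_nonempty w, ?_⟩
    have : (Finset.univ.filter fun i => w i ≤ Finset.univ.sup' Finset.univ_nonempty w) =
        Finset.univ := by
      apply Finset.filter_true_of_mem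
      intro i _
      exact Finset.le_sup' w (Finset.mem_univ i)
    simp only [hS, Set.mem_setOf_eq, this, Finset.card_univ, Fintype.card_fin]
    exact hkN
  have hbdd : BddBelow Sset := by
    refine ⟨Finset.univ.inf' Finset.univ_nonempty w, ?_⟩
    intro t ht
    simp only [hS, Set.mem_setOf_eq] at ht
    have hpos : 0 < (Finset.univ.filter fun i => w i ≤ t).card := lt_of_lt_of_le hk1 ht
    obtain ⟨j, hj⟩ := Finset.card_pos.mp hpos
    simp only [Finset.mem_filter, Finset.mem_univ, true_and] at hj
    exact le_trans (Finset.inf'_le w (Finset.mem_univ j)) hj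
  have hkth : kthSmallest k w = sInf Sset := rfl
  rw [hkth, hrank]
  constructor
  · intro h
    by_contra hlt
    push_neg at hlt
    have hkc : k ≤ c := by omega
    have hFne : (Finset.univ.filter fun j : Fin N => w j ≤ a).Nonempty := by
      rw [← Finset.card_pos]; omega
    obtain ⟨j₀, hj₀mem, hj₀⟩ := Finset.exists_mem_eq_sup'
        hFne w
    set t₀ := (Finset.univ.filter fun j : Fin N => w j ≤ a).sup' hFne w with ht₀
    have hj₀le : w j₀ ≤ a := by
      simpa using (Finset.mem_filter.mp hj₀mem).2
    have ht₀lt : t₀ < a := lt_of_le_of_ne (hj₀ ▸ hj₀le) (hj₀ ▸ hne j₀)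
    have ht₀mem : t₀ ∈ Sset := by
      simp only [hS, Set.mem_setOf_eq]
      refine le_trans hkc (Finset.card_le_card ?_)
      intro j hj
      simp only [Finset.mem_filter, Finset.mem_univ, true_and] at hj ⊢
      exact Finset.le_sup' w (Finset.mem_filter.mpr ⟨Finset.mem_univ j, hj⟩)
    exact absurd h (not_le.mpr (lt_of_le_of_lt (csInf_le hbdd ht₀mem) ht₀lt))
  · intro h
    apply le_csInf hSne
    intro t ht
    simp only [hS, Set.mem_setOf_eq] at ht
    by_contra hta
    push_neg at hta
    have hsub : (Finset.univ.filter fun i => w i ≤ t) ⊆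
        (Finset.univ.filter fun j : Fin N => w j ≤ a) := by
      intro j hj
      simp only [Finset.mem_filter, Finset.mem_univ, true_and] at hj ⊢
      exact hj.trans hta.le
    have := Finset.card_le_card hsub
    omega


lemma rank_comp {n : ℕ} (v : Fin n → ℝ) (e : Equiv.Perm (Fin n)) (i : Fin n) :
    rank (fun j => v (e j)) i = rank v (e i) := by
  unfold rank
  have himg : (Finset.univ.filter fun j => v (e j) ≤ v (e i)) =
      (Finset.univ.filter fun j => v j ≤ v (e i)).image e.symm := by
    ext j
    simp only [Finset.mem_filter, Finset.mem_univ, true_and, Finset.mem_image]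
    constructor
    · intro h
      exact ⟨e j, h, by simp⟩
    · rintro ⟨j', h, rfl⟩
      simpa using h
  rw [himg, Finset.card_image_of_injective _ e.symm.injective]


lemma measurable_cardle {n : ℕ} (i : Fin n) (k : ℕ) :
    MeasurableSet {v : Fin n → ℝ | (Finset.univ.filter fun j => v j ≤ v i).card = k} := by
  have hm : Measurable fun v : Fin n → ℝ =>
      (Finset.univ.filter fun j => v j ≤ v i).card := by
    have : (fun v : Fin n → ℝ => (Finset.univ.filter fun j => v j ≤ v i).card) =
        fun v => ∑ j : Fin n, if v j ≤ v i then 1 else 0 := by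
      funext v; rw [Finset.card_filter]
    rw [this]
    exact Finset.measurable_sum _ fun j _ =>
      Measurable.ite (measurableSet_le (measurable_pi_apply j) (measurable_pi_apply i))
        measurable_const measurable_const
  exact hm (measurableSet_singleton k)

lemma map_eq_pi {Ω : Type*} [MeasurableSpace Ω] {P : Measure Ω} [IsProbabilityMeasure P]
    {n : ℕ} {f : Fin n → Ω → ℝ} (hf : ∀ i, Measurable (f i))
    (hindep : iIndepFun f P) :
    Measure.map (fun ω i => f i ω) P = Measure.pi (fun i => Measure.map (f i) P) := by
  haveI : ∀ i, IsProbabilityMeasure (Measure.map (f i) P) :=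
    fun i => Measure.isProbabilityMeasure_map (hf i).aemeasurable
  refine (Measure.pi_eq fun s hs => ?_).symm
  rw [Measure.map_apply (measurable_pi_lambda _ fun i => hf i) (MeasurableSet.univ_pi hs)]
  have hpre : (fun ω i => f i ω) ⁻¹' Set.pi Set.univ s = ⋂ i, f i ⁻¹' s i := by
    ext ω; simp [Set.mem_pi]
  rw [hpre, hindep.meas_iInter fun i => ⟨s i, hs i, rfl⟩]
  exact Finset.prod_congr rfl fun i _ => (Measure.map_apply (hf i) (hs i)).symm

lemma pi_perm_invariant {n : ℕ} (μ0 : Measure ℝ) [IsProbabilityMeasure μ0]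
    (e : Equiv.Perm (Fin n)) {A : Set (Fin n → ℝ)} (hA : MeasurableSet A) :
    Measure.pi (fun _ : Fin n => μ0) ((fun v : Fin n → ℝ => fun j => v (e.symm j)) ⁻¹' A) =
      Measure.pi (fun _ : Fin n => μ0) A := by
  have hmp := Measure.pi_map_piCongrLeft (β := fun _ : Fin n => ℝ) e (fun _ => μ0)
  have hcoe : ∀ x : Fin n → ℝ,
      (MeasurableEquiv.piCongrLeft (fun _ : Fin n => ℝ) e) x = fun j => x (e.symm j) := by
    intro x; funext j
    conv_lhs => rw [show j = e (e.symm j) by simp]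
    rw [MeasurableEquiv.piCongrLeft_apply_apply]
  calc Measure.pi (fun _ : Fin n => μ0) ((fun v : Fin n → ℝ => fun j => v (e.symm j)) ⁻¹' A)
      = Measure.pi (fun _ : Fin n => μ0)
        ((MeasurableEquiv.piCongrLeft (fun _ : Fin n => ℝ) e) ⁻¹' A) := by
        congr 1; ext x; simp [hcoe x]
    _ = ((Measure.pi (fun _ : Fin n => μ0)).map
        (MeasurableEquiv.piCongrLeft (fun _ : Fin n => ℝ) e)) A := by
        rw [Measure.map_apply (MeasurableEquiv.measurable _) hA]
    _ = Measure.pi (fun _ : Fin n => μ0) A := by rw [hmp]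

end LocalCP

/-- **Exact coverage of local conformal prediction under continuity.**  Under the i.i.d.
assumptions of local conformal prediction, if the common distribution of the localized score
`|U - uθ X| / (g X * σ X)` is atomless, then the coverage probability equals `k/(N+1)`,
which lies in `[1 - α, 1 - α + 1/(N+1))`. -/
theorem local_cp_exact_coverage
    {Ω : Type*} [MeasurableSpace Ω] (P : Measure Ω) [IsProbabilityMeasure P]
    {d N : ℕ}
    (X : Fin (N + 1) → Ω → (Fin d → ℝ)) (U : Fin (N + 1) → Ω → ℝ)
    (hmeas : ∀ j, Measurable fun ω => (X j ω, U j ω))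
    (hindep : iIndepFun (fun j ω => (X j ω, U j ω)) P)
    (hid : ∀ i j, IdentDistrib (fun ω => (X i ω, U i ω)) (fun ω => (X j ω, U j ω)) P P)
    (uθ : (Fin d → ℝ) → ℝ) (huθ : Measurable uθ)
    (σ : (Fin d → ℝ) → ℝ) (hσmeas : Measurable σ) (hσpos : ∀ x, 0 < σ x)
    (g : (Fin d → ℝ) → ℝ) (hgmeas : Measurable g) (hgpos : ∀ x, 0 < g x)
    (hatomless : ∀ (j : Fin (N + 1)) (c : ℝ),
      P {ω | |U j ω - uθ (X j ω)| / (g (X j ω) * σ (X j ω)) = c} = 0)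
    (α : ℝ) (hα : α ∈ Set.Ioo (0 : ℝ) 1)
    (k : ℕ) (hk : k = ⌈((N : ℝ) + 1) * (1 - α)⌉₊) (hkN : k ≤ N)
    (ℓstar : Ω → ℝ)
    (hℓstar : ∀ ω, ℓstar ω =
      kthSmallest k
        (fun j : Fin N =>
          |U j.castSucc ω - uθ (X j.castSucc ω)| /
            (g (X j.castSucc ω) * σ (X j.castSucc ω)))) :
    P {ω |
        uθ (X (Fin.last N) ω) - ℓstar ω * g (X (Fin.last N) ω) * σ (X (Fin.last N) ω) ≤
            U (Fin.last N) ω ∧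
        U (Fin.last N) ω ≤
          uθ (X (Fin.last N) ω) + ℓstar ω * g (X (Fin.last N) ω) * σ (X (Fin.last N) ω)} =
        ENNReal.ofReal ((k : ℝ) / (N + 1)) ∧
      1 - α ≤ (k : ℝ) / (N + 1) ∧ (k : ℝ) / (N + 1) < 1 - α + 1 / (N + 1 : ℝ) := by
  classical
  obtain ⟨hα0, hα1⟩ := hα
  -- basic facts about k
  have hk1 : 1 ≤ k := by
    rw [hk]
    refine Nat.one_le_ceil_iff.mpr ?_
    have : (0:ℝ) < (N:ℝ) + 1 := by positivity
    nlinarith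
  -- the score functions
  set φ : (Fin d → ℝ) × ℝ → ℝ := fun p => |p.2 - uθ p.1| / (g p.1 * σ p.1) with hφdef
  have hφ : Measurable φ :=
    ((measurable_snd.sub (huθ.comp measurable_fst)).abs).div
      ((hgmeas.comp measurable_fst).mul (hσmeas.comp measurable_fst))
  set S : Fin (N + 1) → Ω → ℝ := fun j ω => φ (X j ω, U j ω) with hSdef
  have hSmeas : ∀ j, Measurable (S j) := fun j => hφ.comp (hmeas j)
  have hSindep : iIndepFun S P :=
    hindep.comp (fun _ => φ) (fun _ => hφ)
  have hSid : ∀ i, Measure.map (S i) P = Measure.map (S 0) P :=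
    fun i => ((hid i 0).comp hφ).map_eq
  set μ0 : Measure ℝ := Measure.map (S 0) P with hμ0
  haveI : IsProbabilityMeasure μ0 := Measure.isProbabilityMeasure_map (hSmeas 0).aemeasurable
  have hμ0atom : ∀ c : ℝ, μ0 {c} = 0 := by
    intro c
    rw [hμ0, Measure.map_apply (hSmeas 0) (measurableSet_singleton c)]
    exact hatomless 0 c
  set vecS : Ω → (Fin (N + 1) → ℝ) := fun ω j => S j ω with hvecS
  have hvmeas : Measurable vecS := measurable_pi_lambda _ fun j => hSmeas j
  set ν : Measure (Fin (N + 1) → ℝ) := Measure.pi fun _ => μ0 with hν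
  haveI : IsProbabilityMeasure ν := by rw [hν]; infer_instance
  have hmap : Measure.map vecS P = ν := by
    rw [hν, hvecS, LocalCP.map_eq_pi hSmeas hSindep]
    congr 1
    funext i
    exact hSid i
  -- pairwise distinctness
  have hpairnull : ∀ i j : Fin (N + 1), i ≠ j → P {ω | S i ω = S j ω} = 0 := by
    intro i j hij
    have hIF : IndepFun (S i) (S j) P := hSindep.indepFun hij
    have hmap2 : Measure.map (fun ω => (S i ω, S j ω)) P
        = (Measure.map (S i) P).prod (Measure.map (S j) P) :=
      (indepFun_iff_map_prod_eq_prod_map_map (hSmeas i).aemeasurable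
        (hSmeas j).aemeasurable).mp hIF
    have hdiag : MeasurableSet {p : ℝ × ℝ | p.1 = p.2} :=
      measurableSet_eq_fun measurable_fst measurable_snd
    have heq : P {ω | S i ω = S j ω}
        = ((Measure.map (S i) P).prod (Measure.map (S j) P)) {p : ℝ × ℝ | p.1 = p.2} := by
      rw [← hmap2, Measure.map_apply ((hSmeas i).prodMk (hSmeas j)) hdiag]
      rfl
    rw [heq, Measure.prod_apply hdiag]
    have hz : ∀ x : ℝ, (Measure.map (S j) P) (Prod.mk x ⁻¹' {p : ℝ × ℝ | p.1 = p.2}) = 0 := by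
      intro x
      have : (Prod.mk x ⁻¹' {p : ℝ × ℝ | p.1 = p.2}) = {x} := by
        ext y; simp [eq_comm]
      rw [this, hSid j]
      exact hμ0atom x
    have hz' : ∀ x : ℝ, (Measure.map (S j) P) ({x} : Set ℝ) = 0 := by
      intro x
      rw [hSid j]
      exact hμ0atom x
    simp [hz, hz']
  -- the diagonal-free set
  set D : Set (Fin (N + 1) → ℝ) := {v | Function.Injective v} with hD
  have hDc : Dᶜ = ⋃ i, ⋃ j, ⋃ (_ : i ≠ j), {v : Fin (N + 1) → ℝ | v i = v j} := by
    ext v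
    simp only [hD, Set.mem_compl_iff, Set.mem_setOf_eq, Set.mem_iUnion, Function.Injective,
      not_forall]
    constructor
    · rintro ⟨i, j, hvij, hij⟩
      exact ⟨i, j, hij, hvij⟩
    · rintro ⟨i, j, hij, hvij⟩
      exact ⟨i, j, hvij, hij⟩
  have hDmeas : MeasurableSet D := by
    rw [← compl_compl D]
    refine MeasurableSet.compl ?_
    rw [hDc]
    refine MeasurableSet.iUnion fun i => MeasurableSet.iUnion fun j =>
      MeasurableSet.iUnion fun _ => ?_
    exact measurableSet_eq_fun (measurable_pi_apply i) (measurable_pi_apply j)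
  have hWnull : P (vecS ⁻¹' Dᶜ) = 0 := by
    rw [hDc]
    simp only [Set.preimage_iUnion]
    refine measure_iUnion_null fun i => measure_iUnion_null fun j =>
      measure_iUnion_null fun hij => ?_
    exact hpairnull i j hij
  have hνDc : ν Dᶜ = 0 := by
    rw [← hmap, Measure.map_apply hvmeas hDmeas.compl]
    exact hWnull
  have hνD : ν D = 1 := by
    have := prob_compl_eq_zero_iff (μ := ν) hDmeas
    exact this.mp hνDc
  -- the rank sets
  set A : Fin (N + 1) → ℕ → Set (Fin (N + 1) → ℝ) :=
    fun i r => {v | LocalCP.rank v i = r} with hA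
  have hAmeas : ∀ i r, MeasurableSet (A i r) := fun i r => LocalCP.measurable_cardle i r
  -- exchangeability
  have hAconst : ∀ i r, ν (A i r) = ν (A (Fin.last N) r) := by
    intro i r
    set e : Equiv.Perm (Fin (N + 1)) := Equiv.swap i (Fin.last N) with he
    have hpre : (fun v : Fin (N + 1) → ℝ => fun j => v (e.symm j)) ⁻¹' (A (Fin.last N) r)
        = A i r := by
      ext v
      simp only [hA, Set.mem_preimage, Set.mem_setOf_eq]
      rw [LocalCP.rank_comp v e.symm (Fin.last N)]
      have : e.symm (Fin.last N) = i := by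
        rw [he, Equiv.symm_swap, Equiv.swap_apply_right]
      rw [this]
    rw [← hpre, hν, LocalCP.pi_perm_invariant μ0 e (hAmeas _ _)]
  -- removing the diagonal
  have hAiD : ∀ i r, ν (A i r) = ν (A i r ∩ D) := by
    intro i r
    have h1 : ν (A i r \ D) = 0 :=
      measure_mono_null (fun x hx => hx.2) hνDc
    rw [← measure_inter_add_diff (A i r) hDmeas, h1, add_zero]
  -- the partition sum
  have hAval : ∀ r, 1 ≤ r → r ≤ N + 1 →
      ν (A (Fin.last N) r) = ((N : ℝ≥0∞) + 1)⁻¹ := by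
    intro r h1 h2
    have hdisj : (↑(Finset.univ : Finset (Fin (N + 1))) : Set (Fin (N + 1))).PairwiseDisjoint
        (fun i => A i r ∩ D) := by
      intro i _ i' _ hne
      refine Set.disjoint_left.mpr fun v hv hv' => hne ?_
      exact LocalCP.rank_injective hv.2 (hv.1.trans hv'.1.symm)
    have hunion : ⋃ i ∈ (Finset.univ : Finset (Fin (N + 1))), (A i r ∩ D) = D := by
      ext v
      constructor
      · intro hv
        rw [Set.mem_iUnion] at hv
        obtain ⟨i, hv⟩ := hv
        rw [Set.mem_iUnion] at hv
        obtain ⟨-, hv⟩ := hv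
        exact hv.2
      · intro hvD
        obtain ⟨i, hi, -⟩ := LocalCP.existsUnique_rank hvD h1 h2
        rw [Set.mem_iUnion]
        exact ⟨i, Set.mem_iUnion.mpr ⟨Finset.mem_univ i, ⟨hi, hvD⟩⟩⟩
    have hsum : ∑ i : Fin (N + 1), ν (A i r ∩ D) = 1 := by
      rw [← measure_biUnion_finset hdisj fun i _ => (hAmeas i r).inter hDmeas, hunion, hνD]
    have hsum' : ∑ i : Fin (N + 1), ν (A i r) = 1 := by
      rw [Finset.sum_congr rfl fun i _ => hAiD i r]
      exact hsum
    have hconst : ∑ i : Fin (N + 1), ν (A i r)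
        = ((N : ℝ≥0∞) + 1) * ν (A (Fin.last N) r) := by
      rw [Finset.sum_congr rfl fun i _ => hAconst i r, Finset.sum_const, Finset.card_univ,
        Fintype.card_fin, nsmul_eq_mul]
      congr 1
      push_cast
      ring
    have hc0 : ((N : ℝ≥0∞) + 1) ≠ 0 := by simp
    have hct : ((N : ℝ≥0∞) + 1) ≠ ⊤ := by simp [ENNReal.add_ne_top]
    have hmul : ((N : ℝ≥0∞) + 1) * ν (A (Fin.last N) r) = 1 := by
      rw [← hconst]; exact hsum'
    calc ν (A (Fin.last N) r)
        = (((N : ℝ≥0∞) + 1)⁻¹ * ((N : ℝ≥0∞) + 1)) * ν (A (Fin.last N) r) := by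
          rw [ENNReal.inv_mul_cancel hc0 hct, one_mul]
      _ = ((N : ℝ≥0∞) + 1)⁻¹ * (((N : ℝ≥0∞) + 1) * ν (A (Fin.last N) r)) := by
          rw [mul_assoc]
      _ = ((N : ℝ≥0∞) + 1)⁻¹ := by rw [hmul, mul_one]
  -- the target set
  set B : Set (Fin (N + 1) → ℝ) := {v | LocalCP.rank v (Fin.last N) ≤ k} with hB
  have hBunion : B = ⋃ r ∈ Finset.Icc 1 k, A (Fin.last N) r := by
    ext v
    simp only [hB, hA, Set.mem_setOf_eq, Set.mem_iUnion, Finset.mem_Icc, exists_prop]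
    constructor
    · intro h
      exact ⟨LocalCP.rank v (Fin.last N), ⟨LocalCP.one_le_rank v _, h⟩, rfl⟩
    · rintro ⟨r, ⟨h1, h2⟩, hr⟩
      omega
  have hBmeas : MeasurableSet B := by
    rw [hBunion]
    exact (Finset.Icc 1 k).measurableSet_biUnion fun r _ => hAmeas _ r
  have hνB : ν B = (k : ℝ≥0∞) * ((N : ℝ≥0∞) + 1)⁻¹ := by
    have hdisj : (↑(Finset.Icc 1 k) : Set ℕ).PairwiseDisjoint (fun r => A (Fin.last N) r) := by
      intro r _ r' _ hne
      refine Set.disjoint_left.mpr fun v hv hv' => hne ?_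
      rw [← hv, ← hv']
    rw [hBunion, measure_biUnion_finset hdisj fun r _ => hAmeas _ r]
    rw [Finset.sum_congr rfl fun r hr => hAval r (Finset.mem_Icc.mp hr).1
      (le_trans (Finset.mem_Icc.mp hr).2 (by omega))]
    rw [Finset.sum_const, Nat.card_Icc, nsmul_eq_mul]
    norm_num
  -- identifying the event
  set Ev : Set Ω := {ω |
      uθ (X (Fin.last N) ω) - ℓstar ω * g (X (Fin.last N) ω) * σ (X (Fin.last N) ω) ≤
          U (Fin.last N) ω ∧
      U (Fin.last N) ω ≤
        uθ (X (Fin.last N) ω) + ℓstar ω * g (X (Fin.last N) ω) * σ (X (Fin.last N) ω)}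
    with hEv
  have hEvW : ∀ ω, vecS ω ∈ D → (ω ∈ Ev ↔ vecS ω ∈ B) := by
    intro ω hinj
    have hpos : 0 < g (X (Fin.last N) ω) * σ (X (Fin.last N) ω) :=
      mul_pos (hgpos _) (hσpos _)
    have hstep1 : ω ∈ Ev ↔ S (Fin.last N) ω ≤ ℓstar ω := by
      rw [hEv]
      simp only [Set.mem_setOf_eq]
      rw [show S (Fin.last N) ω
          = |U (Fin.last N) ω - uθ (X (Fin.last N) ω)| /
            (g (X (Fin.last N) ω) * σ (X (Fin.last N) ω)) from rfl]
      rw [div_le_iff₀ hpos, abs_le]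
      have hma : ℓstar ω * (g (X (Fin.last N) ω) * σ (X (Fin.last N) ω))
          = ℓstar ω * g (X (Fin.last N) ω) * σ (X (Fin.last N) ω) := by ring
      rw [hma]
      constructor
      · rintro ⟨h1, h2⟩
        constructor <;> linarith
      · rintro ⟨h1, h2⟩
        constructor <;> linarith
    have hstep2 : ℓstar ω = kthSmallest k (fun j : Fin N => vecS ω j.castSucc) := hℓstar ω
    rw [hstep1, hstep2]
    have := LocalCP.le_kthSmallest_iff hk1 hkN (vecS ω) hinj
    exact this
  -- computing the probability
  have hM : P (vecS ⁻¹' B) = ν B := by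
    rw [← hmap, Measure.map_apply hvmeas hBmeas]
  have hPEv : P Ev = ν B := by
    have hle1 : P Ev ≤ P (vecS ⁻¹' B) := by
      calc P Ev ≤ P ((vecS ⁻¹' B) ∪ vecS ⁻¹' Dᶜ) := by
            refine measure_mono fun ω hω => ?_
            by_cases hD' : vecS ω ∈ D
            · exact Or.inl ((hEvW ω hD').mp hω)
            · exact Or.inr hD'
        _ ≤ P (vecS ⁻¹' B) + P (vecS ⁻¹' Dᶜ) := measure_union_le _ _
        _ = P (vecS ⁻¹' B) := by rw [hWnull, add_zero]
    have hle2 : P (vecS ⁻¹' B) ≤ P Ev := by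
      calc P (vecS ⁻¹' B) ≤ P (Ev ∪ vecS ⁻¹' Dᶜ) := by
            refine measure_mono fun ω hω => ?_
            by_cases hD' : vecS ω ∈ D
            · exact Or.inl ((hEvW ω hD').mpr hω)
            · exact Or.inr hD'
        _ ≤ P Ev + P (vecS ⁻¹' Dᶜ) := measure_union_le _ _
        _ = P Ev := by rw [hWnull, add_zero]
    rw [le_antisymm hle1 hle2, hM]
  -- final arithmetic
  have hNpos : (0 : ℝ) < (N : ℝ) + 1 := by positivity
  have hofReal : ENNReal.ofReal ((k : ℝ) / ((N : ℝ) + 1))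
      = (k : ℝ≥0∞) * ((N : ℝ≥0∞) + 1)⁻¹ := by
    rw [ENNReal.ofReal_div_of_pos hNpos, div_eq_mul_inv]
    congr 1
    · exact ENNReal.ofReal_natCast k
    · congr 1
      have : ((N : ℝ) + 1) = ((N + 1 : ℕ) : ℝ) := by push_cast; ring
      rw [this, ENNReal.ofReal_natCast]
      push_cast
      ring
  have hkge : ((N : ℝ) + 1) * (1 - α) ≤ (k : ℝ) := by
    rw [hk]; exact Nat.le_ceil _
  have hklt : (k : ℝ) < ((N : ℝ) + 1) * (1 - α) + 1 := by
    rw [hk]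
    exact Nat.ceil_lt_add_one (by nlinarith)
  refine ⟨?_, ?_, ?_⟩
  · rw [hPEv, hνB, hofReal]
  · rw [le_div_iff₀ hNpos]
    nlinarith
  · rw [div_lt_iff₀ hNpos]
    have hexp : (1 - α + 1 / ((N : ℝ) + 1)) * ((N : ℝ) + 1)
        = (1 - α) * ((N : ℝ) + 1) + 1 := by
      field_simp
    rw [hexp]
    nlinarith
end

section
/- Let L_1,...,L_n,L_{n+1} be real random variables whose joint law is exchangeable (invariant under every permutation of the n+1 coordinates), and let 1 ≤ k ≤ n. Let L_(k) denote the k-th smallest value among L_1,...,L_n. Then P( L_{n+1} ≤ L_(k) ) ≥ k/(n+1). -/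
open MeasureTheory ProbabilityTheory

open Finset in
lemma le_kthSmallest_iff {m k : ℕ} (hk1 : 1 ≤ k) (hkm : k ≤ m)
    (g : Fin m → ℝ) (c : ℝ) :
    c ≤ kthSmallest k g ↔ (univ.filter fun j => g j < c).card < k := by
  have hm : 0 < m := lt_of_lt_of_le hk1 hkm
  have hne : Nonempty (Fin m) := ⟨⟨0, hm⟩⟩
  set S : Set ℝ := {t : ℝ | k ≤ (univ.filter fun i => g i ≤ t).card} with hS
  have himg : (Finset.univ.image g).Nonempty := (univ_nonempty).image g
  have hSne : S.Nonempty := by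
    refine ⟨(Finset.univ.image g).max' himg, ?_⟩
    have : (univ.filter fun i => g i ≤ (Finset.univ.image g).max' himg) = univ := by
      refine Finset.filter_true_of_mem fun i _ => ?_
      exact Finset.le_max' _ _ (mem_image_of_mem g (mem_univ i))
    simp only [hS, Set.mem_setOf_eq, this, Finset.card_univ, Fintype.card_fin]
    exact hkm
  have hSbdd : BddBelow S := by
    refine ⟨(Finset.univ.image g).min' himg, fun t ht => ?_⟩
    have hpos : 0 < (univ.filter fun i => g i ≤ t).card := lt_of_lt_of_le hk1 ht
    obtain ⟨j, hj⟩ := Finset.card_pos.mp hpos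
    have hjt : g j ≤ t := (Finset.mem_filter.mp hj).2
    exact le_trans (Finset.min'_le _ _ (mem_image_of_mem g (mem_univ j))) hjt
  constructor
  · intro h
    by_contra hcard
    push_neg at hcard
    set F := univ.filter fun j => g j < c with hF
    have hFne : F.Nonempty := Finset.card_pos.mp (lt_of_lt_of_le hk1 hcard)
    have hFimg : (F.image g).Nonempty := hFne.image g
    set t1 := (F.image g).max' hFimg with ht1
    have ht1c : t1 < c := by
      obtain ⟨j, hj, hje⟩ := Finset.mem_image.mp ((F.image g).max'_mem hFimg)
      rw [ht1, ← hje]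
      exact (Finset.mem_filter.mp hj).2
    have ht1S : t1 ∈ S := by
      have hsub : F ⊆ univ.filter fun i => g i ≤ t1 := by
        intro j hj
        exact Finset.mem_filter.mpr ⟨mem_univ j, Finset.le_max' _ _ (mem_image_of_mem g hj)⟩
      exact le_trans hcard (Finset.card_le_card hsub)
    have := csInf_le hSbdd ht1S
    exact absurd (lt_of_le_of_lt (le_trans h this) ht1c) (lt_irrefl c)
  · intro h
    refine le_csInf hSne fun t ht => ?_
    by_contra htc
    push_neg at htc
    have hsub : (univ.filter fun i => g i ≤ t) ⊆ univ.filter fun j => g j < c := by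
      intro i hi
      exact Finset.mem_filter.mpr ⟨Finset.mem_univ i,
        lt_of_le_of_lt (Finset.mem_filter.mp hi).2 htc⟩
    exact absurd (lt_of_le_of_lt (le_trans ht (Finset.card_le_card hsub)) h) (lt_irrefl _)

open Finset in
/-- Combinatorial core: at least `k` indices have fewer than `k` strictly-smaller values. -/
lemma card_rank_lt {m k : ℕ} (hk : k ≤ m) (x : Fin m → ℝ) :
    k ≤ (univ.filter fun i : Fin m =>
        (univ.filter fun j : Fin m => x j < x i).card < k).card := by
  set σ := Tuple.sort x with hσ
  have hmono : Monotone (x ∘ σ) := Tuple.monotone_sort x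
  have claim : ∀ i0 : Fin m, (univ.filter fun j => x j < x (σ i0)).card ≤ (i0 : ℕ) := by
    intro i0
    have := Finset.card_le_card_of_injOn (fun j => ((σ.symm j : Fin m) : ℕ))
      (s := univ.filter fun j => x j < x (σ i0)) (t := Finset.range i0)
      (fun j hj => by
        have hjlt : x j < x (σ i0) := (Finset.mem_filter.mp hj).2
        rw [Finset.mem_coe, Finset.mem_range]
        by_contra hge
        push_neg at hge
        have : (i0 : Fin m) ≤ σ.symm j := by
          exact_mod_cast Fin.le_def.mpr hge
        have := hmono this
        simp only [Function.comp_apply, Equiv.apply_symm_apply] at this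
        exact absurd (lt_of_lt_of_le hjlt this) (lt_irrefl _))
      (fun a _ b _ hab => σ.symm.injective (Fin.val_injective hab))
    simpa using this
  have : ∀ r : Fin k, σ (Fin.castLE hk r) ∈
      univ.filter fun i : Fin m => (univ.filter fun j : Fin m => x j < x i).card < k := by
    intro r
    refine Finset.mem_filter.mpr ⟨mem_univ _, ?_⟩
    exact lt_of_le_of_lt (claim (Fin.castLE hk r)) r.isLt
  have hinj : Set.InjOn (fun r : Fin k => σ (Fin.castLE hk r)) (univ : Finset (Fin k)) := by
    intro a _ b _ hab
    exact Fin.castLE_injective hk (σ.injective hab)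
  have := Finset.card_le_card_of_injOn (fun r : Fin k => σ (Fin.castLE hk r))
    (fun r _ => this r) hinj
  simpa using this

open Finset in
lemma card_filter_succAbove {n : ℕ} (x : Fin (n + 1) → ℝ) (i : Fin (n + 1)) :
    (univ.filter fun j : Fin n => x (i.succAbove j) < x i).card
      = (univ.filter fun j : Fin (n + 1) => x j < x i).card := by
  rw [Finset.card_filter, Finset.card_filter]
  rw [Fin.sum_univ_succAbove (fun j : Fin (n + 1) => if x j < x i then 1 else 0) i]
  simp

/-- **Conformal rank lemma.**  If `L 0, …, L n` are real random variables whose joint law is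
exchangeable, and `1 ≤ k ≤ n`, then the last variable is at most the `k`-th smallest of the
first `n` with probability at least `k/(n+1)`. -/
theorem exchangeable_rank_lemma
    {Ω : Type*} [MeasurableSpace Ω] (P : Measure Ω) [IsProbabilityMeasure P]
    {n : ℕ} (L : Fin (n + 1) → Ω → ℝ)
    (hmeas : ∀ i, Measurable (L i))
    (hexch : ∀ π : Equiv.Perm (Fin (n + 1)),
      P.map (fun ω => fun i => L (π i) ω) = P.map (fun ω => fun i => L i ω))
    (k : ℕ) (hk1 : 1 ≤ k) (hkn : k ≤ n) :
    (k : ENNReal) / (n + 1) ≤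
      P {ω | L (Fin.last n) ω ≤ kthSmallest k (fun i : Fin n => L i.castSucc ω)} := by
  classical
  set A : Fin (n + 1) → Set Ω := fun i =>
    {ω | (Finset.univ.filter fun j : Fin (n + 1) => L j ω < L i ω).card < k} with hA
  -- measurability of the counting sets
  have hcnt : ∀ i : Fin (n + 1), Measurable fun ω =>
      (Finset.univ.filter fun j : Fin (n + 1) => L j ω < L i ω).card := by
    intro i
    have : (fun ω => (Finset.univ.filter fun j : Fin (n + 1) => L j ω < L i ω).card)
        = fun ω => ∑ j : Fin (n + 1), if L j ω < L i ω then 1 else 0 := by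
      funext ω; rw [Finset.card_filter]
    rw [this]
    exact Finset.measurable_sum _ fun j _ =>
      Measurable.ite (measurableSet_lt (hmeas j) (hmeas i)) measurable_const measurable_const
  have hAmeas : ∀ i, MeasurableSet (A i) := by
    intro i
    exact (hcnt i) (MeasurableSet.of_discrete (s := {m : ℕ | m < k}))
  -- the target set equals A (last n)
  have hset : {ω | L (Fin.last n) ω ≤ kthSmallest k (fun i : Fin n => L i.castSucc ω)}
      = A (Fin.last n) := by
    ext ω
    simp only [hA, Set.mem_setOf_eq]
    rw [le_kthSmallest_iff hk1 hkn]
    have : (Finset.univ.filter fun j : Fin n => L j.castSucc ω < L (Fin.last n) ω).card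
        = (Finset.univ.filter fun j : Fin (n + 1) => L j ω < L (Fin.last n) ω).card := by
      have := card_filter_succAbove (fun j => L j ω) (Fin.last n)
      simpa [Fin.succAbove_last] using this
    rw [this]
  -- all A i have the same measure
  have hX : Measurable fun ω => fun i => L i ω := measurable_pi_lambda _ hmeas
  have hPeq : ∀ i : Fin (n + 1), P (A i) = P (A (Fin.last n)) := by
    intro i
    set π := Equiv.swap i (Fin.last n) with hπ
    have hX' : Measurable fun ω => fun j => L (π j) ω :=
      measurable_pi_lambda _ fun j => hmeas (π j)
    set B : Set (Fin (n + 1) → ℝ) :=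
      {x | (Finset.univ.filter fun j : Fin (n + 1) => x j < x (Fin.last n)).card < k} with hB
    have hBmeas : MeasurableSet B := by
      have hc : Measurable fun x : Fin (n + 1) → ℝ =>
          (Finset.univ.filter fun j : Fin (n + 1) => x j < x (Fin.last n)).card := by
        have : (fun x : Fin (n + 1) → ℝ =>
            (Finset.univ.filter fun j : Fin (n + 1) => x j < x (Fin.last n)).card)
            = fun x => ∑ j : Fin (n + 1), if x j < x (Fin.last n) then 1 else 0 := by
          funext x; rw [Finset.card_filter]
        rw [this]
        exact Finset.measurable_sum _ fun j _ =>
          Measurable.ite (measurableSet_lt (measurable_pi_apply j)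
            (measurable_pi_apply (Fin.last n))) measurable_const measurable_const
      exact hc (MeasurableSet.of_discrete (s := {m : ℕ | m < k}))
    have h1 : (fun ω => fun j => L (π j) ω) ⁻¹' B = A i := by
      ext ω
      simp only [hB, hA, Set.mem_preimage, Set.mem_setOf_eq]
      have hπlast : π (Fin.last n) = i := Equiv.swap_apply_right i (Fin.last n)
      simp only [hπlast]
      have : (Finset.univ.filter fun j : Fin (n + 1) => L (π j) ω < L i ω).card
          = (Finset.univ.filter fun j : Fin (n + 1) => L j ω < L i ω).card := by
        rw [Finset.card_filter, Finset.card_filter]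
        exact Equiv.sum_comp π (fun j => if L j ω < L i ω then 1 else 0)
      rw [this]
    have h2 : (fun ω => fun j : Fin (n + 1) => L j ω) ⁻¹' B = A (Fin.last n) := by
      ext ω
      simp only [hB, hA, Set.mem_preimage, Set.mem_setOf_eq]
    calc P (A i) = P.map (fun ω => fun j => L (π j) ω) B := by
          rw [Measure.map_apply hX' hBmeas, h1]
      _ = P.map (fun ω => fun j => L j ω) B := by rw [hexch π]
      _ = P (A (Fin.last n)) := by rw [Measure.map_apply hX hBmeas, h2]
  -- pointwise lower bound on the sum of indicators
  have hpt : ∀ ω, (k : ENNReal) ≤ ∑ i : Fin (n + 1), (A i).indicator (1 : Ω → ENNReal) ω := by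
    intro ω
    have hcomb := card_rank_lt (le_trans hkn (Nat.le_succ n)) (fun j : Fin (n + 1) => L j ω)
    have : ∑ i : Fin (n + 1), (A i).indicator (1 : Ω → ENNReal) ω
        = ((Finset.univ.filter fun i : Fin (n + 1) => ω ∈ A i).card : ENNReal) := by
      rw [Finset.card_filter]
      push_cast
      refine Finset.sum_congr rfl fun i _ => ?_
      by_cases h : ω ∈ A i <;> simp [Set.indicator_apply, h]
    rw [this]
    exact_mod_cast hcomb
  -- integrate
  have hsum : (k : ENNReal) ≤ ∑ i : Fin (n + 1), P (A i) := by
    have h1 : ∑ i : Fin (n + 1), P (A i)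
        = ∫⁻ ω, ∑ i : Fin (n + 1), (A i).indicator (1 : Ω → ENNReal) ω ∂P :=
      calc ∑ i : Fin (n + 1), P (A i)
          = ∑ i : Fin (n + 1), ∫⁻ ω, (A i).indicator (1 : Ω → ENNReal) ω ∂P :=
            Finset.sum_congr rfl fun i _ => (lintegral_indicator_one (hAmeas i)).symm
        _ = ∫⁻ ω, ∑ i : Fin (n + 1), (A i).indicator (1 : Ω → ENNReal) ω ∂P :=
            (lintegral_finset_sum _ fun i _ =>
              measurable_const.indicator (hAmeas i)).symm
    have h2 : (k : ENNReal) = ∫⁻ _, (k : ENNReal) ∂P := by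
      rw [lintegral_const, measure_univ, mul_one]
    rw [h1, h2]
    exact lintegral_mono hpt
  have hsum' : ∑ i : Fin (n + 1), P (A i) = (n + 1 : ENNReal) * P (A (Fin.last n)) := by
    rw [Finset.sum_congr rfl fun i _ => hPeq i, Finset.sum_const, Finset.card_univ,
      Fintype.card_fin, nsmul_eq_mul]
    push_cast
    ring
  rw [hset]
  rw [ENNReal.div_le_iff_le_mul (Or.inl (by simp)) (Or.inl (by finiteness))]
  rw [mul_comm]
  rw [← hsum']
  exact hsum
end

section
/- Let L_1,...,L_n,L_{n+1} be i.i.d. real random variables whose common distribution is atomless (every single point has probability zero), and let 1 ≤ k ≤ n. Let L_(k) denote the k-th smallest value among L_1,...,L_n. Then P( L_{n+1} ≤ L_(k) ) = k/(n+1). -/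
open MeasureTheory ProbabilityTheory

lemma le_kthSmallest_iff_s6 {n k : ℕ} (hk1 : 1 ≤ k) (hkn : k ≤ n) (f : Fin n → ℝ) (x : ℝ) :
    x ≤ kthSmallest k f ↔ ((Finset.univ.filter fun i => f i < x).card < k) := by
  classical
  have hn : 0 < n := lt_of_lt_of_le hk1 hkn
  have : Nonempty (Fin n) := ⟨⟨0, hn⟩⟩
  set A := {t : ℝ | k ≤ (Finset.univ.filter fun i => f i ≤ t).card} with hA
  have hfne : (Finset.univ.image f).Nonempty := (Finset.univ_nonempty).image f
  have hAne : A.Nonempty := by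
    refine ⟨(Finset.univ.image f).max' hfne, ?_⟩
    have hall : (Finset.univ.filter fun i => f i ≤ (Finset.univ.image f).max' hfne)
        = Finset.univ := by
      apply Finset.eq_univ_of_forall
      intro i
      simp only [Finset.mem_filter, Finset.mem_univ, true_and]
      exact Finset.le_max' _ _ (Finset.mem_image_of_mem f (Finset.mem_univ i))
    simp only [hA, Set.mem_setOf_eq, hall, Finset.card_univ, Fintype.card_fin]
    exact hkn
  have hAbdd : BddBelow A := by
    refine ⟨(Finset.univ.image f).min' hfne, fun t ht => ?_⟩
    have hpos : 0 < (Finset.univ.filter fun i => f i ≤ t).card := lt_of_lt_of_le hk1 ht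
    obtain ⟨i, hi⟩ := Finset.card_pos.mp hpos
    have hfi : f i ≤ t := (Finset.mem_filter.mp hi).2
    exact le_trans (Finset.min'_le _ _ (Finset.mem_image_of_mem f (Finset.mem_univ i))) hfi
  show x ≤ sInf A ↔ _
  constructor
  · intro hx
    by_contra h
    push_neg at h
    set s := Finset.univ.filter (fun i => f i < x) with hs
    have hsne : s.Nonempty := Finset.card_pos.mp (lt_of_lt_of_le hk1 h)
    have htx : (s.image f).max' (hsne.image f) < x := by
      obtain ⟨i, hi, hfi⟩ := Finset.mem_image.mp ((s.image f).max'_mem (hsne.image f))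
      rw [← hfi]
      exact (Finset.mem_filter.mp hi).2
    have htA : (s.image f).max' (hsne.image f) ∈ A := by
      refine le_trans h (Finset.card_le_card ?_)
      intro i hi
      simp only [Finset.mem_filter, Finset.mem_univ, true_and]
      exact Finset.le_max' _ _ (Finset.mem_image_of_mem f hi)
    have := csInf_le hAbdd htA
    linarith
  · intro h
    refine le_csInf hAne fun t ht => ?_
    by_contra hxt
    push_neg at hxt
    have hsub : (Finset.univ.filter fun i => f i ≤ t) ⊆ (Finset.univ.filter fun i => f i < x) := by
      intro i hi
      simp only [Finset.mem_filter, Finset.mem_univ, true_and] at hi ⊢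
      exact lt_of_le_of_lt hi hxt
    have : k ≤ (Finset.univ.filter fun i => f i < x).card :=
      le_trans ht (Finset.card_le_card hsub)
    omega

/-- The rank of the `j`-th value in `v`. -/
noncomputable def rankCnt {m : ℕ} (j : Fin m) (v : Fin m → ℝ) : ℕ :=
  (Finset.univ.filter fun i => v i ≤ v j).card

lemma measurable_rankCnt {m : ℕ} (j : Fin m) : Measurable (rankCnt j) := by
  have h : rankCnt j = fun v : Fin m → ℝ => ∑ i : Fin m, if v i ≤ v j then 1 else 0 := by
    funext v; simp only [rankCnt, Finset.card_filter]
  rw [h]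
  exact Finset.measurable_sum _ fun i _ =>
    Measurable.ite (measurableSet_le (measurable_pi_apply i) (measurable_pi_apply j))
      measurable_const measurable_const

lemma rankCnt_comp_perm {m : ℕ} (e : Equiv.Perm (Fin m)) (j : Fin m) (v : Fin m → ℝ) :
    rankCnt j (v ∘ e) = rankCnt (e j) v := by
  unfold rankCnt
  apply Finset.card_equiv e
  intro i
  simp [Function.comp]

lemma one_le_rankCnt {m : ℕ} (j : Fin m) (v : Fin m → ℝ) : 1 ≤ rankCnt j v :=
  Finset.card_pos.mpr ⟨j, by simp⟩

lemma rankCnt_le {m : ℕ} (j : Fin m) (v : Fin m → ℝ) : rankCnt j v ≤ m := by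
  have := Finset.card_filter_le Finset.univ (fun i => v i ≤ v j)
  exact this.trans (by simp)

lemma rankCnt_injective {m : ℕ} {v : Fin m → ℝ} (hv : Function.Injective v) :
    Function.Injective fun j => rankCnt j v := by
  have hmono : ∀ {a b : Fin m}, v a < v b → rankCnt a v < rankCnt b v := by
    intro a b hab
    apply Finset.card_lt_card
    constructor
    · intro i hi
      simp only [Finset.mem_filter, Finset.mem_univ, true_and] at hi ⊢
      exact le_trans hi (le_of_lt hab)
    · intro hsub
      have hb : b ∈ Finset.univ.filter fun i => v i ≤ v b := by simp
      have := hsub hb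
      simp only [Finset.mem_filter, Finset.mem_univ, true_and] at this
      exact absurd this (not_le.mpr hab)
  intro a b hab
  by_contra hne
  have hvne : v a ≠ v b := fun h => hne (hv h)
  rcases lt_or_gt_of_ne hvne with h | h
  · exact absurd hab (Nat.ne_of_lt (hmono h))
  · exact absurd hab.symm (Nat.ne_of_lt (hmono h))

lemma rankCnt_last_eq {n : ℕ} (v : Fin (n + 1) → ℝ)
    (hv : ∀ i : Fin n, v i.castSucc ≠ v (Fin.last n)) :
    rankCnt (Fin.last n) v
      = (Finset.univ.filter fun i : Fin n => v i.castSucc < v (Fin.last n)).card + 1 := by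
  unfold rankCnt
  rw [Finset.card_filter, Finset.card_filter, Fin.sum_univ_castSucc]
  congr 1
  · refine Finset.sum_congr rfl fun i _ => ?_
    have := hv i
    by_cases h : v i.castSucc < v (Fin.last n)
    · simp [h, le_of_lt h]
    · have : ¬ v i.castSucc ≤ v (Fin.last n) := fun hle =>
        h (lt_of_le_of_ne hle (hv i))
      simp [h, this]
  · simp

/-- **Exact rank probability for i.i.d. atomless scores.**  If `L 0, …, L n` are i.i.d. real
random variables with an atomless common distribution, and `1 ≤ k ≤ n`, then the last
variable is at most the `k`-th smallest of the first `n` with probability exactly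
`k/(n+1)`. -/
theorem iid_atomless_rank_lemma
    {Ω : Type*} [MeasurableSpace Ω] (P : Measure Ω) [IsProbabilityMeasure P]
    {n : ℕ} (L : Fin (n + 1) → Ω → ℝ)
    (hmeas : ∀ i, Measurable (L i))
    (hindep : iIndepFun L P)
    (hid : ∀ i j, IdentDistrib (L i) (L j) P P)
    (hatomless : ∀ (i : Fin (n + 1)) (c : ℝ), P {ω | L i ω = c} = 0)
    (k : ℕ) (hk1 : 1 ≤ k) (hkn : k ≤ n) :
    P {ω | L (Fin.last n) ω ≤ kthSmallest k (fun i : Fin n => L i.castSucc ω)} =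
      (k : ENNReal) / (n + 1) := by
  classical
  -- the joint vector
  set V : Ω → (Fin (n + 1) → ℝ) := fun ω i => L i ω with hV
  have hVmeas : Measurable V := measurable_pi_lambda _ fun i => hmeas i
  -- common marginal
  set ν : Measure ℝ := Measure.map (L (Fin.last n)) P with hνdef
  have hν : ∀ i, Measure.map (L i) P = ν := fun i => (hid i (Fin.last n)).map_eq
  haveI : IsProbabilityMeasure ν :=
    Measure.isProbabilityMeasure_map (hmeas (Fin.last n)).aemeasurable
  -- joint law of any permuted vector is `Measure.pi`
  have hjoint : ∀ e : Equiv.Perm (Fin (n + 1)),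
      Measure.map (fun ω i => L (e i) ω) P = Measure.pi (fun _ => ν) := by
    intro e
    refine (Measure.pi_eq (μ := fun _ => ν) fun s hs => ?_).symm
    rw [Measure.map_apply (measurable_pi_lambda _ fun i => hmeas (e i))
      (MeasurableSet.univ_pi hs)]
    have hpre : (fun ω i => L (e i) ω) ⁻¹' (Set.univ.pi s)
        = ⋂ i ∈ Finset.univ, L i ⁻¹' s (e.symm i) := by
      ext ω
      simp only [Set.mem_preimage, Set.mem_pi, Set.mem_univ, true_implies,
        Set.mem_iInter, Finset.mem_univ, true_implies]
      constructor
      · intro h i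
        have := h (e.symm i)
        simpa using this
      · intro h i
        have := h (e i)
        simpa using this
    rw [hpre, hindep.measure_inter_preimage_eq_mul Finset.univ (fun i _ => hs (e.symm i))]
    have h1 : ∀ i, P (L i ⁻¹' s (e.symm i)) = ν (s (e.symm i)) := by
      intro i
      rw [← hν i, Measure.map_apply (hmeas i) (hs _)]
    calc ∏ i, P (L i ⁻¹' s (e.symm i)) = ∏ i, ν (s (e.symm i)) := by
          exact Finset.prod_congr rfl fun i _ => h1 i
      _ = ∏ i, ν (s i) := Equiv.prod_comp e.symm fun i => ν (s i)
  -- the exchangeability consequence we need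
  have hlaw : ∀ (e : Equiv.Perm (Fin (n + 1))) {A : Set (Fin (n + 1) → ℝ)},
      MeasurableSet A → P ((fun ω i => L (e i) ω) ⁻¹' A) = P (V ⁻¹' A) := by
    intro e A hA
    have h1 := hjoint e
    have h2 := hjoint (Equiv.refl _)
    have hVid : (fun ω i => L ((Equiv.refl (Fin (n+1))) i) ω) = V := rfl
    rw [hVid] at h2
    rw [← Measure.map_apply (measurable_pi_lambda _ fun i => hmeas (e i)) hA,
      ← Measure.map_apply hVmeas hA, h1, h2]
  -- the "no ties" set
  set D : Set Ω := {ω | Function.Injective fun i => L i ω} with hD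
  have hij_null : ∀ i j : Fin (n + 1), i ≠ j → P {ω | L i ω = L j ω} = 0 := by
    intro i j hij
    have hIndep : IndepFun (L i) (L j) P := hindep.indepFun hij
    have hmap : Measure.map (fun ω => (L i ω, L j ω)) P
        = (Measure.map (L i) P).prod (Measure.map (L j) P) :=
      (indepFun_iff_map_prod_eq_prod_map_map (hmeas i).aemeasurable
        (hmeas j).aemeasurable).mp hIndep
    have hdiag : MeasurableSet {p : ℝ × ℝ | p.1 = p.2} :=
      measurableSet_eq_fun measurable_fst measurable_snd
    haveI : IsProbabilityMeasure (Measure.map (L i) P) :=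
      Measure.isProbabilityMeasure_map (hmeas i).aemeasurable
    haveI : IsProbabilityMeasure (Measure.map (L j) P) :=
      Measure.isProbabilityMeasure_map (hmeas j).aemeasurable
    have hset : {ω | L i ω = L j ω} = (fun ω => (L i ω, L j ω)) ⁻¹' {p | p.1 = p.2} := rfl
    rw [hset, ← Measure.map_apply ((hmeas i).prodMk (hmeas j)) hdiag, hmap,
      Measure.prod_apply hdiag]
    have hzero : ∀ x : ℝ, (Measure.map (L j) P) (Prod.mk x ⁻¹' {p : ℝ × ℝ | p.1 = p.2}) = 0 := by
      intro x
      have hpre : Prod.mk x ⁻¹' {p : ℝ × ℝ | p.1 = p.2} = {x} := by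
        ext y; simp [eq_comm]
      rw [hpre, Measure.map_apply (hmeas j) (measurableSet_singleton x)]
      exact hatomless j x
    calc ∫⁻ x, (Measure.map (L j) P) (Prod.mk x ⁻¹' {p : ℝ × ℝ | p.1 = p.2})
          ∂(Measure.map (L i) P)
        = ∫⁻ _, 0 ∂(Measure.map (L i) P) := lintegral_congr hzero
      _ = 0 := lintegral_zero
  have hDnull : P Dᶜ = 0 := by
    have hsub : Dᶜ ⊆ ⋃ i, ⋃ j,
        (if i = j then (∅ : Set Ω) else {ω | L i ω = L j ω}) := by
      intro ω hω
      simp only [hD, Set.mem_compl_iff, Set.mem_setOf_eq, Function.Injective, not_forall] at hω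
      obtain ⟨a, b, hab, hne⟩ := hω
      refine Set.mem_iUnion.mpr ⟨a, Set.mem_iUnion.mpr ⟨b, ?_⟩⟩
      rw [if_neg hne]
      exact hab
    refine measure_mono_null hsub (measure_iUnion_null fun i => measure_iUnion_null fun j => ?_)
    by_cases h : i = j
    · simp [h]
    · rw [if_neg h]; exact hij_null i j h
  have hDmeas : MeasurableSet D := by
    have hDeq : D = ⋂ (i) (j) (_ : i ≠ j), {ω | L i ω = L j ω}ᶜ := by
      ext ω
      simp only [hD, Set.mem_setOf_eq, Set.mem_iInter, Set.mem_compl_iff]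
      constructor
      · intro h i j hij he
        exact hij (h he)
      · intro h a b hab
        by_contra hne
        exact h a b hne hab
    rw [hDeq]
    exact MeasurableSet.iInter fun i => MeasurableSet.iInter fun j =>
      MeasurableSet.iInter fun _ => (measurableSet_eq_fun (hmeas i) (hmeas j)).compl
  have hD1 : P D = 1 := by
    rwa [← prob_compl_eq_zero_iff hDmeas] at *
  -- measure is determined on D
  have hPeq : ∀ {S T : Set Ω}, (∀ ω ∈ D, (ω ∈ S ↔ ω ∈ T)) → P S = P T := by
    intro S T h
    have h1 : S ⊆ T ∪ Dᶜ := by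
      intro ω hω
      by_cases hd : ω ∈ D
      · exact Or.inl ((h ω hd).1 hω)
      · exact Or.inr hd
    have h2 : T ⊆ S ∪ Dᶜ := by
      intro ω hω
      by_cases hd : ω ∈ D
      · exact Or.inl ((h ω hd).2 hω)
      · exact Or.inr hd
    apply le_antisymm
    · calc P S ≤ P (T ∪ Dᶜ) := measure_mono h1
        _ ≤ P T + P Dᶜ := measure_union_le _ _
        _ = P T := by rw [hDnull, add_zero]
    · calc P T ≤ P (S ∪ Dᶜ) := measure_mono h2
        _ ≤ P S + P Dᶜ := measure_union_le _ _
        _ = P S := by rw [hDnull, add_zero]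
  -- exchangeability of ranks
  have hNmeas : ∀ r : ℕ, MeasurableSet {w : Fin (n + 1) → ℝ | rankCnt (Fin.last n) w = r} :=
    fun r => measurable_rankCnt (Fin.last n) (measurableSet_singleton r)
  have hNj : ∀ (j : Fin (n + 1)) (r : ℕ),
      P {ω | rankCnt j (V ω) = r} = P {ω | rankCnt (Fin.last n) (V ω) = r} := by
    intro j r
    set e : Equiv.Perm (Fin (n + 1)) := Equiv.swap (Fin.last n) j with he
    have hkey : ∀ ω, rankCnt j (V ω) = rankCnt (Fin.last n) (fun i => L (e i) ω) := by
      intro ω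
      have h1 : (fun i => L (e i) ω) = V ω ∘ e := rfl
      rw [h1, rankCnt_comp_perm e (Fin.last n) (V ω)]
      congr 1
      simp [he, Equiv.swap_apply_left]
    have hset : {ω | rankCnt j (V ω) = r}
        = (fun ω i => L (e i) ω) ⁻¹' {w | rankCnt (Fin.last n) w = r} := by
      ext ω
      simp only [Set.mem_setOf_eq, Set.mem_preimage, hkey ω]
    rw [hset, hlaw e (hNmeas r)]
    rfl
  -- the key uniform rank probability
  have hkeyP : ∀ r : ℕ, 1 ≤ r → r ≤ n + 1 →
      P {ω | rankCnt (Fin.last n) (V ω) = r} = ((n : ENNReal) + 1)⁻¹ := by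
    intro r hr1 hr2
    set p := P {ω | rankCnt (Fin.last n) (V ω) = r} with hp
    -- the sets
    set B : Fin (n + 1) → Set Ω := fun j => {ω | rankCnt j (V ω) = r} ∩ D with hB
    have hBmeas : ∀ j, MeasurableSet (B j) := by
      intro j
      refine MeasurableSet.inter ?_ hDmeas
      have : {ω | rankCnt j (V ω) = r} = V ⁻¹' {w | rankCnt j w = r} := rfl
      rw [this]
      exact hVmeas (measurable_rankCnt j (measurableSet_singleton r))
    have hBdisj : ∀ j j' : Fin (n + 1), j ≠ j' → Disjoint (B j) (B j') := by
      intro j j' hjj'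
      rw [Set.disjoint_left]
      intro ω hω hω'
      have hinj : Function.Injective (V ω) := hω.2
      have h1 : rankCnt j (V ω) = rankCnt j' (V ω) := by rw [hω.1, hω'.1]
      exact hjj' (rankCnt_injective hinj h1)
    have hBcover : D ⊆ ⋃ j, B j := by
      intro ω hω
      have hinj : Function.Injective (V ω) := hω
      have himg : Finset.image (fun j => rankCnt j (V ω)) Finset.univ
          = Finset.Icc 1 (n + 1) := by
        apply Finset.eq_of_subset_of_card_le
        · intro x hx
          obtain ⟨j, _, hj⟩ := Finset.mem_image.mp hx
          rw [← hj]
          exact Finset.mem_Icc.mpr ⟨one_le_rankCnt j (V ω), rankCnt_le j (V ω)⟩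
        · rw [Finset.card_image_of_injective _ (rankCnt_injective hinj)]
          simp [Nat.card_Icc]
      have hrmem : r ∈ Finset.image (fun j => rankCnt j (V ω)) Finset.univ := by
        rw [himg]
        exact Finset.mem_Icc.mpr ⟨hr1, hr2⟩
      obtain ⟨j, _, hj⟩ := Finset.mem_image.mp hrmem
      exact Set.mem_iUnion.mpr ⟨j, ⟨hj, hω⟩⟩
    have hsum : ∑ j : Fin (n + 1), P (B j) = 1 := by
      have hmu := measure_iUnion (μ := P) (fun j j' h => hBdisj j j' h) hBmeas
      rw [tsum_fintype] at hmu
      have hU : ⋃ j, B j = D := by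
        apply Set.Subset.antisymm
        · exact Set.iUnion_subset fun j => Set.inter_subset_right
        · exact hBcover
      rw [← hmu, hU, hD1]
    have hPB : ∀ j, P (B j) = p := by
      intro j
      have h1 : P (B j) = P {ω | rankCnt j (V ω) = r} := by
        apply hPeq
        intro ω hω
        simp only [hB, Set.mem_inter_iff, Set.mem_setOf_eq]
        exact ⟨fun h => h.1, fun h => ⟨h, hω⟩⟩
      rw [h1, hNj j r]
    have hfinal : ((n : ENNReal) + 1) * p = 1 := by
      have : ∑ j : Fin (n + 1), P (B j) = ((n + 1 : ℕ) : ENNReal) * p := by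
        rw [Finset.sum_congr rfl fun j _ => hPB j, Finset.sum_const, Finset.card_univ,
          Fintype.card_fin, nsmul_eq_mul]
      rw [this] at hsum
      have hcast : ((n : ENNReal) + 1) = ((n + 1 : ℕ) : ENNReal) := by push_cast; ring
      rw [hcast]
      exact hsum
    have hne0 : ((n : ENNReal) + 1) ≠ 0 := by simp
    have hnetop : ((n : ENNReal) + 1) ≠ ⊤ := by simp
    calc p = ((n : ENNReal) + 1)⁻¹ * (((n : ENNReal) + 1) * p) := by
          rw [← mul_assoc, ENNReal.inv_mul_cancel hne0 hnetop, one_mul]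
      _ = ((n : ENNReal) + 1)⁻¹ := by rw [hfinal, mul_one]
  -- rewrite the target event via the counting characterization
  have hEeq : {ω | L (Fin.last n) ω ≤ kthSmallest k (fun i : Fin n => L i.castSucc ω)}
      = {ω | (Finset.univ.filter fun i : Fin n =>
          L i.castSucc ω < L (Fin.last n) ω).card < k} := by
    ext ω
    exact le_kthSmallest_iff_s6 hk1 hkn _ _
  rw [hEeq]
  -- relate to the rank of the last coordinate
  have hstep : P {ω | (Finset.univ.filter fun i : Fin n =>
        L i.castSucc ω < L (Fin.last n) ω).card < k}
      = P {ω | rankCnt (Fin.last n) (V ω) ≤ k} := by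
    apply hPeq
    intro ω hω
    have hinj : Function.Injective (V ω) := hω
    have hties : ∀ i : Fin n, V ω i.castSucc ≠ V ω (Fin.last n) := by
      intro i he
      exact absurd (hinj he) (Fin.ne_of_lt (Fin.castSucc_lt_last i))
    have hre := rankCnt_last_eq (V ω) hties
    have hcd : (Finset.filter (fun i : Fin n => V ω i.castSucc < V ω (Fin.last n))
        Finset.univ).card
        = (Finset.filter (fun i : Fin n => L i.castSucc ω < L (Fin.last n) ω)
        Finset.univ).card := rfl
    simp only [Set.mem_setOf_eq, hre, hcd]
    omega
  rw [hstep]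
  -- decompose by exact rank
  have hdecomp : {ω | rankCnt (Fin.last n) (V ω) ≤ k}
      = ⋃ r ∈ Finset.Icc 1 k, {ω | rankCnt (Fin.last n) (V ω) = r} := by
    ext ω
    simp only [Set.mem_setOf_eq, Set.mem_iUnion, Finset.mem_Icc, exists_prop]
    constructor
    · intro h
      exact ⟨rankCnt (Fin.last n) (V ω), ⟨one_le_rankCnt _ _, h⟩, rfl⟩
    · rintro ⟨r, ⟨_, hr2⟩, hr⟩
      omega
  rw [hdecomp]
  have hmeas' : ∀ r ∈ Finset.Icc 1 k,
      MeasurableSet {ω | rankCnt (Fin.last n) (V ω) = r} := by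
    intro r _
    have : {ω | rankCnt (Fin.last n) (V ω) = r}
        = V ⁻¹' {w | rankCnt (Fin.last n) w = r} := rfl
    rw [this]
    exact hVmeas (hNmeas r)
  have hdisj : Set.PairwiseDisjoint (↑(Finset.Icc 1 k))
      fun r => {ω | rankCnt (Fin.last n) (V ω) = r} := by
    intro r _ r' _ hrr'
    rw [Function.onFun, Set.disjoint_left]
    intro ω hω hω'
    exact hrr' (hω.symm.trans hω')
  rw [measure_biUnion_finset hdisj hmeas']
  have hterm : ∀ r ∈ Finset.Icc 1 k,
      P {ω | rankCnt (Fin.last n) (V ω) = r} = ((n : ENNReal) + 1)⁻¹ := by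
    intro r hr
    obtain ⟨hr1, hr2⟩ := Finset.mem_Icc.mp hr
    exact hkeyP r hr1 (le_trans hr2 (by omega))
  rw [Finset.sum_congr rfl hterm, Finset.sum_const, Nat.card_Icc, nsmul_eq_mul]
  simp only [Nat.add_sub_cancel]
  rw [ENNReal.div_eq_inv_mul, mul_comm]
end
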